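/- arXiv:1611.03808 — 7 statements merged into one kernel-verified Lean document; each statement's English description precedes it below -/
import Mathlib

section
/- Let (X,M,μ) be a measure space with a ball-basis B. If a ball B ∈ B and balls G_k ∈ B satisfy G_k ∩ B ≠ ∅ and μ(G_k) → sup_{A∈B} μ(A), then X ⊂ ∪_k G_k^{[1]}; moreover, for every ball A ∈ B there exists k_0 such that A ⊂ G_k^{[1]} for all k ≥ k_0. -/
open MeasureTheory Set ENNReal

/-- A ball-basis on a measure space: conditions B1)-B4) of Karagulyan. -/
structure BallBasis {X : Type*} [MeasurableSpace X] (μ : Measure X)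
    (𝓑 : Set (Set X)) (hull : Set X → Set X) (K : ℝ≥0∞) : Prop where
  K_pos : 0 < K
  meas : ∀ B ∈ 𝓑, MeasurableSet B
  /-- B1) balls have positive finite measure -/
  pos : ∀ B ∈ 𝓑, 0 < μ B ∧ μ B < ⊤
  /-- B2) any two points lie in a common ball -/
  two : ∀ x y : X, ∃ B ∈ 𝓑, x ∈ B ∧ y ∈ B
  /-- B3) approximation of measurable sets by countable unions of balls -/
  approx : ∀ E : Set X, MeasurableSet E → ∀ ε : ℝ≥0∞, 0 < ε →
    ∃ 𝒞 ⊆ 𝓑, 𝒞.Countable ∧ μ ((E \ ⋃₀ 𝒞) ∪ (⋃₀ 𝒞 \ E)) < ε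
  /-- B4) every ball has a hull -/
  hull_mem : ∀ B ∈ 𝓑, hull B ∈ 𝓑
  hull_sub : ∀ B ∈ 𝓑, ∀ A ∈ 𝓑, μ A ≤ 2 * μ B → (A ∩ B).Nonempty → A ⊆ hull B
  hull_bound : ∀ B ∈ 𝓑, μ (hull B) ≤ K * μ B

/-- Lemma 3.2: if balls G_k meet a fixed ball B and
μ(G_k) → sup_{A∈𝓑} μ(A), then the hulls of the G_k cover X; moreover any
ball A is eventually contained in every hull G_k^{[1]}. -/
theorem hulls_eventually_cover
    {X : Type*} [MeasurableSpace X] (μ : Measure X)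
    (𝓑 : Set (Set X)) (hull : Set X → Set X) (K : ℝ≥0∞)
    (hbasis : BallBasis μ 𝓑 hull K)
    (B : Set X) (hB : B ∈ 𝓑) (G : ℕ → Set X) (hG : ∀ k, G k ∈ 𝓑)
    (hmeet : ∀ k, (G k ∩ B).Nonempty)
    (hlim : Filter.Tendsto (fun k => μ (G k)) Filter.atTop
      (nhds (⨆ A ∈ 𝓑, μ A))) :
    (Set.univ : Set X) ⊆ (⋃ k, hull (G k)) ∧
      ∀ A ∈ 𝓑, ∃ k₀ : ℕ, ∀ k ≥ k₀, A ⊆ hull (G k) := by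
  classical
  have hne : ∀ C ∈ 𝓑, C.Nonempty := fun C hC =>
    nonempty_of_measure_ne_zero (hbasis.pos C hC).1.ne'
  have hself : ∀ C ∈ 𝓑, C ⊆ hull C := fun C hC =>
    hbasis.hull_sub C hC C hC (le_mul_of_one_le_left zero_le one_le_two)
      (by simpa [Set.inter_self] using hne C hC)
  have merge : ∀ P ∈ 𝓑, ∀ Q ∈ 𝓑, (P ∩ Q).Nonempty →
      ∃ E ∈ 𝓑, P ⊆ E ∧ Q ⊆ E := by
    intro P hP Q hQ hPQ
    rcases le_total (μ P) (μ Q) with h | h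
    · exact ⟨hull Q, hbasis.hull_mem Q hQ,
        hbasis.hull_sub Q hQ P hP
          (h.trans (le_mul_of_one_le_left zero_le one_le_two)) hPQ,
        hself Q hQ⟩
    · exact ⟨hull P, hbasis.hull_mem P hP, hself P hP,
        hbasis.hull_sub P hP Q hQ
          (h.trans (le_mul_of_one_le_left zero_le one_le_two))
          (by rwa [Set.inter_comm] at hPQ)⟩
  set L := ⨆ A ∈ 𝓑, μ A with hL
  have hL0 : 0 < L := lt_of_lt_of_le (hbasis.pos B hB).1 (le_biSup _ hB)
  have main : ∀ A ∈ 𝓑, ∃ k₀ : ℕ, ∀ k ≥ k₀, A ⊆ hull (G k) := by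
    intro A hA
    obtain ⟨a, ha⟩ := hne A hA
    obtain ⟨b, hb⟩ := hne B hB
    obtain ⟨D, hD, haD, hbD⟩ := hbasis.two a b
    obtain ⟨E₁, hE₁, hAE₁, hDE₁⟩ := merge A hA D hD ⟨a, ha, haD⟩
    obtain ⟨E, hE, hE₁E, hBE⟩ := merge E₁ hE₁ B hB ⟨b, hDE₁ hbD, hb⟩
    have hAE : A ⊆ E := hAE₁.trans hE₁E
    have hEL : μ E ≤ L := le_biSup _ hE
    have hEtop : μ E < ⊤ := (hbasis.pos E hE).2
    -- choose a threshold c < L with μ E ≤ 2 * c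
    obtain ⟨c, hcL, hEc⟩ : ∃ c, c < L ∧ μ E ≤ 2 * c := by
      rcases lt_or_eq_of_le hEL with hlt | heq
      · exact ⟨μ E, hlt, le_mul_of_one_le_left zero_le one_le_two⟩
      · have hLtop : L < ⊤ := heq ▸ hEtop
        refine ⟨L / 2, ENNReal.half_lt_self hL0.ne' hLtop.ne, ?_⟩
        rw [ENNReal.mul_div_cancel' (by norm_num) (by norm_num)]
        exact heq.le
    have hev : ∀ᶠ k in Filter.atTop, c < μ (G k) :=
      hlim.eventually (eventually_gt_nhds hcL)
    obtain ⟨k₀, hk₀⟩ := Filter.eventually_atTop.mp hev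
    refine ⟨k₀, fun k hk => hAE.trans ?_⟩
    refine hbasis.hull_sub (G k) (hG k) E hE
      (hEc.trans (mul_le_mul_right (hk₀ k hk).le 2)) ?_
    obtain ⟨x, hxG, hxB⟩ := hmeet k
    exact ⟨x, hBE hxB, hxG⟩
  refine ⟨fun x _ => ?_, main⟩
  obtain ⟨A, hA, hxA, -⟩ := hbasis.two x x
  obtain ⟨k₀, hk₀⟩ := main A hA
  exact Set.mem_iUnion.mpr ⟨k₀, hk₀ k₀ le_rfl hxA⟩
end

section
/- Let (X,M,μ) be a measure space with a ball-basis B (hull constant K). For every bounded measurable set E there exists a sequence of balls B_k such that E ⊂ ∪_k B_k almost surely and Σ_k μ(B_k) ≤ 2K·μ(E). -/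
open MeasureTheory Set ENNReal

lemma stage_cover {X : Type*} [MeasurableSpace X] {μ : Measure X}
    {𝓑 : Set (Set X)} {hull : Set X → Set X} {K : ℝ≥0∞}
    (hb : BallBasis μ 𝓑 hull K) (F : Set X) (hF : MeasurableSet F)
    (hFfin : μ F ≠ ⊤) (ε : ℝ≥0∞) (hε : 0 < ε) (hεfin : ε ≠ ⊤) :
    ∃ 𝒟 ⊆ 𝓑, 𝒟.Countable ∧ μ (F \ ⋃₀ 𝒟) < ε ∧
      (∑' B : 𝒟, μ (B : Set X)) ≤ K * (μ F + ε) := by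
  obtain ⟨𝒞, h𝒞B, h𝒞c, h𝒞⟩ := hb.approx F hF ε hε
  have hsub : ⋃₀ 𝒞 ⊆ F ∪ (⋃₀ 𝒞 \ F) := fun x hx => by
    by_cases h : x ∈ F
    · exact Or.inl h
    · exact Or.inr ⟨hx, h⟩
  have hGle : μ (⋃₀ 𝒞) ≤ μ F + ε :=
    (measure_mono hsub).trans <| (measure_union_le _ _).trans <|
      add_le_add le_rfl (le_of_lt (lt_of_le_of_lt (measure_mono subset_union_right) h𝒞))
  have hFεfin : μ F + ε ≠ ⊤ := ENNReal.add_ne_top.2 ⟨hFfin, hεfin⟩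
  have hGfin : μ (⋃₀ 𝒞) ≠ ⊤ := (lt_of_le_of_lt hGle hFεfin.lt_top).ne
  -- Vitali selection
  obtain ⟨u, hu𝒞, hdisj, hcov⟩ :=
    Vitali.exists_disjoint_subfamily_covering_enlargement (fun A : Set X => A) 𝒞
      (fun A => (μ A).toReal) 2 one_lt_two (fun a _ => ENNReal.toReal_nonneg)
      ((μ (⋃₀ 𝒞)).toReal)
      (fun a ha => ENNReal.toReal_mono hGfin (measure_mono (subset_sUnion_of_mem ha)))
      (fun a ha => nonempty_of_measure_ne_zero (hb.pos a (h𝒞B ha)).1.ne')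
  have huc : u.Countable := h𝒞c.mono hu𝒞
  -- every ball of 𝒞 is inside the hull of a selected ball
  have hkey : ⋃₀ 𝒞 ⊆ ⋃₀ (hull '' u) := by
    intro x hx
    obtain ⟨a, ha, hxa⟩ := hx
    obtain ⟨b, hbu, hnon, hle⟩ := hcov a ha
    have hafin : μ a ≠ ⊤ := ((measure_mono (subset_sUnion_of_mem ha)).trans_lt hGfin.lt_top).ne
    have hbfin : μ b ≠ ⊤ :=
      ((measure_mono (subset_sUnion_of_mem (hu𝒞 hbu))).trans_lt hGfin.lt_top).ne
    have hle' : μ a ≤ 2 * μ b := by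
      rw [← ENNReal.toReal_le_toReal hafin (by
        exact ENNReal.mul_ne_top (by norm_num) hbfin)]
      rwa [ENNReal.toReal_mul, ENNReal.toReal_ofNat] at *
    have := hb.hull_sub b (h𝒞B (hu𝒞 hbu)) a (h𝒞B ha) hle' hnon
    exact ⟨hull b, mem_image_of_mem _ hbu, this hxa⟩
  refine ⟨hull '' u, ?_, huc.image _, ?_, ?_⟩
  · rintro D ⟨A, hA, rfl⟩
    exact hb.hull_mem A (h𝒞B (hu𝒞 hA))
  · refine lt_of_le_of_lt (measure_mono fun x hx => ?_) (lt_of_le_of_lt (measure_mono subset_union_left) h𝒞)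
    exact ⟨hx.1, fun h => hx.2 (hkey h)⟩
  · -- sum estimate
    have hinj : ∀ D : hull '' u, ∃ A ∈ u, hull A = (D : Set X) := fun D => D.2
    choose g hg₁ hg₂ using hinj
    have ginj : Function.Injective (fun D : hull '' u => (⟨g D, hg₁ D⟩ : u)) := by
      intro D₁ D₂ h
      have : g D₁ = g D₂ := congrArg Subtype.val h
      apply Subtype.ext
      rw [← hg₂ D₁, ← hg₂ D₂, this]
    calc (∑' D : hull '' u, μ (D : Set X))
        = ∑' D : hull '' u, μ (hull (g D)) := by
          exact tsum_congr fun D => by rw [hg₂ D]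
      _ ≤ ∑' A : u, μ (hull (A : Set X)) :=
          ENNReal.tsum_comp_le_tsum_of_injective ginj (fun A : u => μ (hull (A : Set X)))
      _ ≤ ∑' A : u, K * μ (A : Set X) :=
          ENNReal.tsum_le_tsum fun A => hb.hull_bound A (h𝒞B (hu𝒞 A.2))
      _ = K * ∑' A : u, μ (A : Set X) := ENNReal.tsum_mul_left
      _ = K * μ (⋃₀ u) := by
          rw [measure_sUnion huc (fun a ha b hb' hab => hdisj ha hb' hab)
            (fun s hs => hb.meas s (h𝒞B (hu𝒞 hs)))]
      _ ≤ K * (μ F + ε) := by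
          exact mul_le_mul_right ((measure_mono (sUnion_subset_sUnion hu𝒞)).trans hGle) K


lemma sum_bound_aux (K lam : ℝ≥0∞) (_hlamfin : lam ≠ ⊤) (m : ℕ → ℝ≥0∞) (h0 : m 0 = lam)
    (hle : ∀ n, m (n + 1) ≤ lam * 2⁻¹ ^ (n + 3)) :
    (∑' n, K * (m n + lam * 2⁻¹ ^ (n + 3))) ≤ 2 * K * lam := by
  have hgeom : (∑' n : ℕ, (2⁻¹ : ℝ≥0∞) ^ n) = 2 := by
    rw [ENNReal.tsum_geometric, ENNReal.one_sub_inv_two, inv_inv]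
  have hterm : ∀ n, K * (m (n + 1) + lam * 2⁻¹ ^ (n + 1 + 3)) ≤ K * (lam * 2⁻¹ ^ (n + 2)) := by
    intro n
    apply mul_le_mul_right
    calc m (n + 1) + lam * 2⁻¹ ^ (n + 4) ≤ lam * 2⁻¹ ^ (n + 3) + lam * 2⁻¹ ^ (n + 4) :=
          add_le_add_left (hle n) _
      _ ≤ lam * 2⁻¹ ^ (n + 3) + lam * 2⁻¹ ^ (n + 3) := by
          apply add_le_add_right
          rw [show n + 4 = (n + 3) + 1 from rfl, pow_succ, ← mul_assoc]
          exact mul_le_of_le_one_right' (ENNReal.inv_le_one.2 one_le_two)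
      _ = lam * 2⁻¹ ^ (n + 2) := by
          rw [← two_mul, ← mul_assoc, mul_comm 2 lam, mul_assoc]
          congr 1
          rw [show n + 3 = (n + 2) + 1 from rfl, pow_succ, mul_comm (2 : ℝ≥0∞),
            mul_assoc, ENNReal.inv_mul_cancel two_ne_zero ENNReal.ofNat_ne_top, mul_one]
  have htail : (∑' n, K * (m (n + 1) + lam * 2⁻¹ ^ (n + 1 + 3))) ≤ K * lam * 2⁻¹ := by
    calc (∑' n, K * (m (n + 1) + lam * 2⁻¹ ^ (n + 1 + 3)))
        ≤ ∑' n, K * (lam * 2⁻¹ ^ (n + 2)) := ENNReal.tsum_le_tsum hterm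
      _ = K * lam * 2⁻¹ ^ 2 * ∑' n : ℕ, (2⁻¹ : ℝ≥0∞) ^ n := by
          rw [← ENNReal.tsum_mul_left]
          exact tsum_congr fun n => by ring
      _ = K * lam * 2⁻¹ := by
          have hp : (2⁻¹ : ℝ≥0∞) ^ 2 * 2 = 2⁻¹ := by
            rw [pow_two, mul_assoc, ENNReal.inv_mul_cancel two_ne_zero ENNReal.ofNat_ne_top,
              mul_one]
          rw [hgeom, mul_assoc (K * lam), hp]
  calc (∑' n, K * (m n + lam * 2⁻¹ ^ (n + 3)))
      = K * (m 0 + lam * 2⁻¹ ^ 3) + ∑' n, K * (m (n + 1) + lam * 2⁻¹ ^ (n + 1 + 3)) :=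
        tsum_eq_zero_add' ENNReal.summable
    _ ≤ K * (lam + lam * 2⁻¹ ^ 3) + K * lam * 2⁻¹ := add_le_add (by rw [h0]) htail
    _ ≤ 2 * K * lam := by
        have : K * (lam + lam * 2⁻¹ ^ 3) + K * lam * 2⁻¹ =
            K * lam * (1 + 2⁻¹ ^ 3 + 2⁻¹) := by ring
        rw [this]
        have hhalf : (2⁻¹ : ℝ≥0∞) ≤ 1 := ENNReal.inv_le_one.2 one_le_two
        have h8 : (2⁻¹ : ℝ≥0∞) ^ 3 ≤ 2⁻¹ := by
          calc (2⁻¹ : ℝ≥0∞) ^ 3 = 2⁻¹ * (2⁻¹ * 2⁻¹) := by ring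
            _ ≤ 2⁻¹ * 1 := mul_le_mul_right (mul_le_one' hhalf hhalf) _
            _ = 2⁻¹ := mul_one _
        have hc : (1 + (2⁻¹ : ℝ≥0∞) ^ 3 + 2⁻¹) ≤ 2 := by
          calc (1 + (2⁻¹ : ℝ≥0∞) ^ 3 + 2⁻¹) ≤ 1 + 2⁻¹ + 2⁻¹ :=
              add_le_add_left (add_le_add_right h8 1) _
            _ = 2 := by
              rw [add_assoc, ← two_mul, ENNReal.mul_inv_cancel two_ne_zero ENNReal.ofNat_ne_top,
                one_add_one_eq_two]
        calc K * lam * (1 + 2⁻¹ ^ 3 + 2⁻¹) ≤ K * lam * 2 := mul_le_mul_right hc _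
          _ = 2 * K * lam := by ring

/-- Lemma 3.6: in a measure space with a ball-basis, every
bounded measurable set is almost surely covered by a countable family of
balls whose total measure is at most 2K times the measure of the set. -/
theorem cover_with_controlled_total_measure
    {X : Type*} [MeasurableSpace X] (μ : Measure X)
    (𝓑 : Set (Set X)) (hull : Set X → Set X) (K : ℝ≥0∞)
    (hbasis : BallBasis μ 𝓑 hull K)
    (E : Set X) (hEmeas : MeasurableSet E) (hbd : ∃ B ∈ 𝓑, E ⊆ B) :
    ∃ 𝒞 ⊆ 𝓑, 𝒞.Countable ∧ μ (E \ ⋃₀ 𝒞) = 0 ∧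
      (∑' B : 𝒞, μ (B : Set X)) ≤ 2 * K * μ E := by
  obtain ⟨B₀, hB₀, hEB₀⟩ := hbd
  have hEfin : μ E ≠ ⊤ := ((measure_mono hEB₀).trans_lt (hbasis.pos B₀ hB₀).2).ne
  by_cases hE0 : μ E = 0
  · refine ⟨∅, empty_subset _, countable_empty, ?_, ?_⟩
    · simpa using hE0
    · simp
  -- now 0 < μ E < ⊤
  set lam := μ E with hlam
  set eps : ℕ → ℝ≥0∞ := fun n => lam * 2⁻¹ ^ (n + 3) with heps
  have heps_pos : ∀ n, 0 < eps n := fun n =>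
    ENNReal.mul_pos hE0 (pow_ne_zero _ (ENNReal.inv_ne_zero.2 ENNReal.ofNat_ne_top))
  have heps_fin : ∀ n, eps n ≠ ⊤ := fun n =>
    ENNReal.mul_ne_top hEfin (by
      exact (pow_ne_top (by norm_num)))
  -- the choice function for one stage
  classical
  let pickD : ℕ → Set X → Set (Set X) := fun n F =>
    if h : MeasurableSet F ∧ μ F ≠ ⊤ then
      (stage_cover hbasis F h.1 h.2 (eps n) (heps_pos n) (heps_fin n)).choose
    else ∅
  let Efun : ℕ → Set X := fun n => Nat.rec E (fun n Fn => Fn \ ⋃₀ pickD n Fn) n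
  have hEfun_succ : ∀ n, Efun (n + 1) = Efun n \ ⋃₀ pickD n (Efun n) := fun n => rfl
  -- invariant
  have hspec : ∀ n, MeasurableSet (Efun n) ∧ Efun n ⊆ E := by
    intro n
    induction n with
    | zero => exact ⟨hEmeas, subset_rfl⟩
    | succ n ih =>
      have hfin : μ (Efun n) ≠ ⊤ := ((measure_mono ih.2).trans_lt hEfin.lt_top).ne
      have hd : pickD n (Efun n) =
          (stage_cover hbasis (Efun n) ih.1 hfin (eps n) (heps_pos n) (heps_fin n)).choose := by
        simp only [pickD, dif_pos (And.intro ih.1 hfin)]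
      obtain ⟨hsubB, hcnt, -, -⟩ :=
        (stage_cover hbasis (Efun n) ih.1 hfin (eps n) (heps_pos n) (heps_fin n)).choose_spec
      refine ⟨?_, (diff_subset).trans ih.2⟩
      rw [hEfun_succ n, hd]
      exact ih.1.diff (MeasurableSet.sUnion hcnt fun s hs => hbasis.meas s (hsubB hs))
  have hEfun_fin : ∀ n, μ (Efun n) ≠ ⊤ :=
    fun n => ((measure_mono (hspec n).2).trans_lt hEfin.lt_top).ne
  -- the spec of each stage
  have hstage : ∀ n, pickD n (Efun n) ⊆ 𝓑 ∧ (pickD n (Efun n)).Countable ∧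
      μ (Efun n \ ⋃₀ pickD n (Efun n)) < eps n ∧
      (∑' B : pickD n (Efun n), μ (B : Set X)) ≤ K * (μ (Efun n) + eps n) := by
    intro n
    have hd : pickD n (Efun n) =
        (stage_cover hbasis (Efun n) (hspec n).1 (hEfun_fin n) (eps n) (heps_pos n)
          (heps_fin n)).choose := by
      simp only [pickD, dif_pos (And.intro (hspec n).1 (hEfun_fin n))]
    rw [hd]
    obtain ⟨h1, h2, h3, h4⟩ :=
      (stage_cover hbasis (Efun n) (hspec n).1 (hEfun_fin n) (eps n) (heps_pos n)
        (heps_fin n)).choose_spec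
    exact ⟨h1, h2, h3, h4⟩
  have hE_le : ∀ n, μ (Efun (n + 1)) ≤ eps n := fun n => by
    rw [hEfun_succ n]; exact (hstage n).2.2.1.le
  refine ⟨⋃ n, pickD n (Efun n), iUnion_subset fun n => (hstage n).1,
    countable_iUnion fun n => (hstage n).2.1, ?_, ?_⟩
  · -- null remainder
    have hsubn : ∀ n, E \ ⋃₀ ⋃ n, pickD n (Efun n) ⊆ Efun n := by
      intro n
      induction n with
      | zero => exact diff_subset
      | succ n ih =>
        intro x hx
        rw [hEfun_succ n]
        refine ⟨ih hx, fun hmem => hx.2 ?_⟩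
        obtain ⟨s, hs, hxs⟩ := hmem
        exact ⟨s, mem_iUnion.2 ⟨n, hs⟩, hxs⟩
    have hle : ∀ n, μ (E \ ⋃₀ ⋃ n, pickD n (Efun n)) ≤ lam * 2⁻¹ ^ (n + 3) :=
      fun n => ((measure_mono (hsubn (n + 1))).trans (hE_le n))
    have htend : Filter.Tendsto (fun n : ℕ => lam * 2⁻¹ ^ (n + 3)) Filter.atTop (nhds 0) := by
      have h1 : Filter.Tendsto (fun n : ℕ => (2⁻¹ : ℝ≥0∞) ^ n) Filter.atTop (nhds 0) :=
        ENNReal.tendsto_pow_atTop_nhds_zero_of_lt_one (by norm_num)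
      have h2 : Filter.Tendsto (fun n : ℕ => (2⁻¹ : ℝ≥0∞) ^ (n + 3)) Filter.atTop (nhds 0) :=
        h1.comp (Filter.tendsto_add_atTop_nat 3)
      simpa using ENNReal.Tendsto.const_mul h2 (Or.inr hEfin)
    exact le_antisymm (ge_of_tendsto' htend (fun n => hle n)) zero_le
  · -- total measure estimate
    have h1 : (∑' B : (⋃ n, pickD n (Efun n)), μ (B : Set X)) ≤
        ∑' n, ∑' B : pickD n (Efun n), μ (B : Set X) :=
      ENNReal.tsum_iUnion_le_tsum _ _
    have h2 : ∀ n, (∑' B : pickD n (Efun n), μ (B : Set X)) ≤ K * (μ (Efun n) + eps n) :=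
      fun n => (hstage n).2.2.2
    have h3 : (∑' n, K * (μ (Efun n) + eps n)) ≤ 2 * K * lam := by
      simpa [heps] using sum_bound_aux K lam hEfin (fun n => μ (Efun n)) rfl
        (fun n => by simpa [heps] using hE_le n)
    calc (∑' B : (⋃ n, pickD n (Efun n)), μ (B : Set X))
        ≤ ∑' n, ∑' B : pickD n (Efun n), μ (B : Set X) := h1
      _ ≤ ∑' n, K * (μ (Efun n) + eps n) := ENNReal.tsum_le_tsum h2
      _ ≤ 2 * K * lam := h3
end

section
/- Let (X,M,μ) be a measure space with a ball-basis B with hull constant K, and 1 ≤ r < ∞. The maximal operator M_r f(x) = sup_{B ∈ B, x ∈ B} (μ(B)^{-1} ∫_B |f|^r dμ)^{1/r} satisfies the weak-type bound: for every f ∈ L^r(X) and λ > 0, μ^*({x : M_r f(x) > λ}) ≤ K · λ^{-r} ∫_X |f|^r dμ, where μ^* is outer measure. -/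
open MeasureTheory Set ENNReal

/-- The maximal operator `M_r` associated with a ball-basis. -/
noncomputable def maxOp {X : Type*} [MeasurableSpace X] (μ : Measure X)
    (𝓑 : Set (Set X)) (r : ℝ) (f : X → ℝ) (x : X) : ℝ≥0∞ :=
  ⨆ B ∈ 𝓑, ⨆ (_ : x ∈ B),
    ((∫⁻ y in B, ENNReal.ofReal |f y| ^ r ∂μ) / μ B) ^ (1 / r)

/-- Theorem 4.1: the maximal operator M_r associated with a
ball-basis satisfies the weak-L^r bound with constant K^{1/r}, i.e.
μ*({M_r f > λ}) ≤ K λ^{-r} ∫ |f|^r. -/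
theorem maximal_weak_type
    {X : Type*} [MeasurableSpace X] (μ : Measure X)
    (𝓑 : Set (Set X)) (hull : Set X → Set X) (K : ℝ≥0∞)
    (hbasis : BallBasis μ 𝓑 hull K)
    (r : ℝ) (hr : 1 ≤ r)
    (f : X → ℝ) (hf : MemLp f (ENNReal.ofReal r) μ)
    (l : ℝ≥0∞) (hl : 0 < l) :
    μ {x | l < maxOp μ 𝓑 r f x} ≤
      K / l ^ r * ∫⁻ x, ENNReal.ofReal |f x| ^ r ∂μ := by
  classical
  set g : X → ℝ≥0∞ := fun x => ENNReal.ofReal |f x| ^ r with hg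
  set ν : Measure X := μ.withDensity g with hν
  have hr0 : (0:ℝ) < r := lt_of_lt_of_le one_pos hr
  have hνB : ∀ B : Set X, MeasurableSet B → ν B = ∫⁻ y in B, g y ∂μ := fun B hB =>
    withDensity_apply g hB
  have hνuniv : ν univ = ∫⁻ x, g x ∂μ := by
    rw [hνB univ MeasurableSet.univ, Measure.restrict_univ]
  -- trivial case l = ⊤
  rcases eq_or_ne l ⊤ with hlt | hlt
  · have : {x | l < maxOp μ 𝓑 r f x} = ∅ := by
      ext x; simp [hlt]
    rw [this, measure_empty]; exact bot_le
  have hl0 : l ≠ 0 := hl.ne'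
  have hlr0 : l ^ r ≠ 0 := by
    simp only [ne_eq, ENNReal.rpow_eq_zero_iff, not_or, not_and_or]
    exact ⟨Or.inl hl0, Or.inl hlt⟩
  have hlrt : l ^ r ≠ ⊤ := ENNReal.rpow_ne_top_of_nonneg hr0.le hlt
  -- trivial case: infinite integral
  rcases eq_or_ne (∫⁻ x, g x ∂μ) ⊤ with hI | hI
  · rw [hI, ENNReal.mul_top]
    · exact le_top
    · rw [ne_eq, ENNReal.div_eq_zero_iff, not_or]
      exact ⟨hbasis.K_pos.ne', hlrt⟩
  have hνfin : ν univ ≠ ⊤ := by rw [hνuniv]; exact hI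
  -- the family of "large-average" balls
  set t : Set (Set X) := {B | B ∈ 𝓑 ∧ l ^ r * μ B < ν B} with ht
  have tballs : ∀ a ∈ t, a ∈ 𝓑 := fun a ha => ha.1
  have tmeas : ∀ a ∈ t, MeasurableSet a := fun a ha => hbasis.meas a ha.1
  -- the superlevel set is covered by t
  have hEsub : {x | l < maxOp μ 𝓑 r f x} ⊆ ⋃₀ t := by
    intro x hx
    simp only [mem_setOf_eq, maxOp, lt_iSup_iff] at hx
    obtain ⟨B, hB, hxB, hlt'⟩ := hx
    refine ⟨B, ⟨hB, ?_⟩, hxB⟩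
    obtain ⟨hμB0, hμBt⟩ := hbasis.pos B hB
    have h1 : l ^ r < (∫⁻ y in B, g y ∂μ) / μ B := by
      have h2 := ENNReal.rpow_lt_rpow hlt' hr0
      rwa [← ENNReal.rpow_mul, one_div, inv_mul_cancel₀ hr0.ne', ENNReal.rpow_one] at h2
    rw [← hνB B (hbasis.meas B hB)] at h1
    exact (ENNReal.lt_div_iff_mul_lt (Or.inl hμB0.ne') (Or.inl hμBt.ne)).mp h1
  -- measure bound on members of t
  have tbound : ∀ a ∈ t, μ a ≤ ν univ / l ^ r := by
    intro a ha
    have h1 : l ^ r * μ a ≤ ν univ := le_trans ha.2.le (measure_mono (subset_univ a))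
    rw [ENNReal.le_div_iff_mul_le (Or.inl hlr0) (Or.inl hlrt), mul_comm]
    exact h1
  have hdivfin : ν univ / l ^ r ≠ ⊤ := by
    rw [ne_eq, ENNReal.div_eq_top, not_or, not_and_or, not_and_or]
    exact ⟨Or.inr hlr0, Or.inl hνfin⟩
  -- Vitali selection
  obtain ⟨u, hut, hdisj, hcov⟩ :=
    Vitali.exists_disjoint_subfamily_covering_enlargement (id : Set X → Set X) t
      (fun a => (μ a).toReal) 2 one_lt_two (fun a _ => ENNReal.toReal_nonneg)
      ((ν univ / l ^ r).toReal)
      (fun a ha => ENNReal.toReal_mono hdivfin (tbound a ha))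
      (fun a ha => nonempty_of_measure_ne_zero (hbasis.pos a (tballs a ha)).1.ne')
  -- u is countable
  have hdisj' : Pairwise (Function.onFun Disjoint fun i : ↥u => (i : Set X)) := by
    intro i j hij
    exact hdisj i.2 j.2 (Subtype.coe_injective.ne hij)
  have hcnt : u.Countable := by
    have h1 : Set.Countable {i : ↥u | 0 < ν (i : Set X)} :=
      MeasureTheory.Measure.countable_meas_pos_of_disjoint_of_meas_iUnion_ne_top ν
        (fun i : ↥u => tmeas i (hut i.2)) hdisj'
        (ne_top_of_le_ne_top hνfin (measure_mono (subset_univ _)))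
    have h2 : {i : ↥u | 0 < ν (i : Set X)} = Set.univ := by
      refine eq_univ_of_forall fun i => ?_
      have h3 := (hut i.2).2
      exact lt_of_le_of_lt bot_le h3
    rw [h2, Set.countable_univ_iff] at h1
    exact Set.countable_coe_iff.mp h1
  -- superlevel set is covered by hulls of u
  have hEhull : {x | l < maxOp μ 𝓑 r f x} ⊆ ⋃ b ∈ u, hull b := by
    intro x hx
    obtain ⟨a, hat, hxa⟩ := hEsub hx
    obtain ⟨b, hbu, hinter, hsize⟩ := hcov a hat
    have hbt : b ∈ t := hut hbu
    have hμab : μ a ≤ 2 * μ b := by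
      have hat' : μ a ≠ ⊤ := (hbasis.pos a hat.1).2.ne
      have hbt' : μ b ≠ ⊤ := (hbasis.pos b hbt.1).2.ne
      have h2 : (2 : ℝ≥0∞) * μ b ≠ ⊤ := ENNReal.mul_ne_top (by norm_num) hbt'
      rw [← ENNReal.toReal_le_toReal hat' h2, ENNReal.toReal_mul]
      simpa using hsize
    exact mem_biUnion hbu
      (hbasis.hull_sub b hbt.1 a hat.1 hμab hinter hxa)
  -- sum up
  have husum : ∑' b : ↥u, ν (b : Set X) ≤ ν univ := by
    exact le_trans (le_of_eq (measure_biUnion hcnt hdisj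
      fun b hb => tmeas b (hut hb)).symm) (measure_mono (subset_univ _))
  calc μ {x | l < maxOp μ 𝓑 r f x}
      ≤ μ (⋃ b ∈ u, hull b) := measure_mono hEhull
    _ ≤ ∑' b : ↥u, μ (hull (b : Set X)) := measure_biUnion_le μ hcnt _
    _ ≤ ∑' b : ↥u, K * μ (b : Set X) :=
        ENNReal.tsum_le_tsum fun b => hbasis.hull_bound b (tballs b (hut b.2))
    _ = K * ∑' b : ↥u, μ (b : Set X) := ENNReal.tsum_mul_left
    _ ≤ K * ∑' b : ↥u, ν (b : Set X) / l ^ r := by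
        gcongr with b
        rw [ENNReal.le_div_iff_mul_le (Or.inl hlr0) (Or.inl hlrt), mul_comm]
        exact ((hut b.2).2).le
    _ = K * ((∑' b : ↥u, ν (b : Set X)) / l ^ r) := by simp only [div_eq_mul_inv, ENNReal.tsum_mul_right]
    _ ≤ K * (ν univ / l ^ r) := by gcongr
    _ = K / l ^ r * ν univ := by
        simp only [div_eq_mul_inv]
        ring
    _ = K / l ^ r * ∫⁻ x, g x ∂μ := by rw [hνuniv]
end

section
/- Let (X,M,μ) be a measure space with a ball-basis B (hull constant K) and let w be an A_p weight, 1 < p < ∞. Then the maximal operator associated to the measure w, M_w f(x) = sup_{B∋x} w(B)^{-1} ∫_B |f| dw, satisfies the weak-type (1,1) bound with respect to w: ‖M_w‖_{L¹(w)→L^{1,∞}(w)} ≤ (2K)^p [w]_{A_p}. -/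
open MeasureTheory Set ENNReal

/-- The A_p characteristic of a weight w with respect to the family 𝓑. -/
noncomputable def apConst {X : Type*} [MeasurableSpace X] (μ : Measure X)
    (𝓑 : Set (Set X)) (p : ℝ) (w : X → ℝ≥0∞) : ℝ≥0∞ :=
  ⨆ B ∈ 𝓑, ((∫⁻ y in B, w y ∂μ) / μ B) *
    (((∫⁻ y in B, (w y) ^ (-(p - 1)⁻¹) ∂μ) / μ B) ^ (p - 1))

/-- The maximal operator associated with the measure w dμ. -/
noncomputable def maxOpW {X : Type*} [MeasurableSpace X] (ν : Measure X)
    (𝓑 : Set (Set X)) (f : X → ℝ≥0∞) (x : X) : ℝ≥0∞ :=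
  ⨆ B ∈ 𝓑, ⨆ (_ : x ∈ B), (∫⁻ y in B, f y ∂ν) / ν B

lemma my_sigma_zero_top {X : Type*} [MeasurableSpace X] (μ : Measure X)
    {p : ℝ} (hp : 1 < p) {w : X → ℝ≥0∞} (hw : Measurable w)
    {B : Set X} (hB0 : μ B ≠ 0)
    (hS : ∫⁻ y in B, (w y) ^ (-(p - 1)⁻¹) ∂μ = 0) :
    ∫⁻ y in B, w y ∂μ = ⊤ := by
  have hc : -(p - 1)⁻¹ < 0 := by
    have : (0:ℝ) < (p-1)⁻¹ := inv_pos.2 (by linarith)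
    linarith
  have h0 : (fun y => (w y) ^ (-(p - 1)⁻¹)) =ᵐ[μ.restrict B] 0 :=
    (lintegral_eq_zero_iff (hw.pow_const _)).1 hS
  have hwt : ∀ᵐ y ∂(μ.restrict B), w y = ⊤ := by
    filter_upwards [h0] with y hy
    rcases ENNReal.rpow_eq_zero_iff.1 hy with ⟨_, hlt⟩ | ⟨h, _⟩
    · exact absurd hlt (not_lt_of_ge (le_of_lt hc))
    · exact h
  calc ∫⁻ y in B, w y ∂μ = ∫⁻ _ in B, ⊤ ∂μ := lintegral_congr_ae (hwt.mono fun y hy => hy)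
    _ = ⊤ * μ B := by rw [setLIntegral_const]
    _ = ⊤ := ENNReal.top_mul hB0

/-- The key doubling estimate. -/
lemma my_nu_hull_le {X : Type*} [MeasurableSpace X] (μ : Measure X)
    (𝓑 : Set (Set X)) (hull : Set X → Set X) (K : ℝ≥0∞)
    (hbasis : BallBasis μ 𝓑 hull K)
    {p : ℝ} (hp : 1 < p) {w : X → ℝ≥0∞} (hw : Measurable w)
    (hAp : apConst μ 𝓑 p w ≠ ⊤) (hA0 : apConst μ 𝓑 p w ≠ 0)
    {B : Set X} (hB : B ∈ 𝓑) :
    μ.withDensity w (hull B) ≤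
      (2 * K) ^ p * apConst μ 𝓑 p w * μ.withDensity w B := by
  have hp0 : (0:ℝ) < p := by linarith
  have hp1 : (0:ℝ) < p - 1 := by linarith
  have hB' : hull B ∈ 𝓑 := hbasis.hull_mem B hB
  have hmB := hbasis.meas B hB
  have hmB' := hbasis.meas _ hB'
  obtain ⟨ha0, hat⟩ := hbasis.pos B hB
  obtain ⟨ha'0, ha't⟩ := hbasis.pos _ hB'
  have hBB' : B ⊆ hull B :=
    hbasis.hull_sub B hB B hB (le_mul_of_one_le_left (zero_le) one_le_two)
      (by rw [inter_self]; exact nonempty_of_measure_ne_zero ha0.ne')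
  have hball : ((∫⁻ y in hull B, w y ∂μ) / μ (hull B)) *
      (((∫⁻ y in hull B, (w y) ^ (-(p - 1)⁻¹) ∂μ) / μ (hull B)) ^ (p - 1))
      ≤ apConst μ 𝓑 p w := by
    unfold apConst
    exact le_biSup (fun B => ((∫⁻ y in B, w y ∂μ) / μ B) *
      (((∫⁻ y in B, (w y) ^ (-(p - 1)⁻¹) ∂μ) / μ B) ^ (p - 1))) hB'
  set A := apConst μ 𝓑 p w with hA
  set a := μ B with ha
  set a' := μ (hull B) with ha'
  set W' := ∫⁻ y in hull B, w y ∂μ with hW'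
  set S' := ∫⁻ y in hull B, (w y) ^ (-(p - 1)⁻¹) ∂μ with hS'
  set V := ∫⁻ y in B, w y ∂μ with hV
  have hLHS : μ.withDensity w (hull B) = W' := withDensity_apply w hmB'
  have hRHS : μ.withDensity w B = V := withDensity_apply w hmB
  have hC0 : (2 * K) ^ p * A ≠ 0 := by
    refine mul_ne_zero ?_ hA0
    intro h
    rcases ENNReal.rpow_eq_zero_iff.1 h with ⟨h1, _⟩ | ⟨_, h2⟩
    · exact (mul_ne_zero two_ne_zero hbasis.K_pos.ne') h1
    · linarith
  rw [hLHS, hRHS]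
  by_cases hS0 : S' = 0
  · have hSB : ∫⁻ y in B, (w y) ^ (-(p - 1)⁻¹) ∂μ = 0 :=
      le_antisymm (hS0 ▸ lintegral_mono_set hBB') (zero_le)
    have : V = ⊤ := my_sigma_zero_top μ hp hw ha0.ne' hSB
    rw [this, ENNReal.mul_top hC0]
    exact le_top
  by_cases hW0 : W' = 0
  · rw [hW0]; exact zero_le
  have hat' : a' ≠ ⊤ := ha't.ne
  have ha'0' : a' ≠ 0 := ha'0.ne'
  have hSt : S' ≠ ⊤ := by
    intro h
    have h2 : (S' / a') ^ (p - 1) = ⊤ := by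
      rw [h, ENNReal.top_div_of_ne_top hat', ENNReal.top_rpow_of_pos hp1]
    have h3 : W' / a' ≠ 0 := by
      rw [Ne, ENNReal.div_eq_zero_iff]; push_neg; exact ⟨hW0, hat'⟩
    rw [h2, ENNReal.mul_top h3] at hball
    exact hAp (top_le_iff.mp hball)
  have hWt : W' ≠ ⊤ := by
    intro h
    have h2 : W' / a' = ⊤ := by rw [h, ENNReal.top_div_of_ne_top hat']
    have h3 : (S' / a') ^ (p - 1) ≠ 0 := by
      rw [Ne, ENNReal.rpow_eq_zero_iff]
      push_neg
      constructor
      · intro hz; rw [ENNReal.div_eq_zero_iff] at hz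
        exact absurd hp1 (by rcases hz with hz | hz; exacts [absurd hz hS0, absurd hz hat'])
      · intro _; linarith
    rw [h2, ENNReal.top_mul h3] at hball
    exact hAp (top_le_iff.mp hball)
  -- a.e. finiteness and positivity of w on B
  have hle : μ.restrict B ≤ μ.restrict (hull B) := Measure.restrict_mono hBB' le_rfl
  have hwlt : ∀ᵐ y ∂(μ.restrict B), w y < ⊤ := ae_mono hle (ae_lt_top hw hWt)
  have hσlt : ∀ᵐ y ∂(μ.restrict B), (w y) ^ (-(p - 1)⁻¹) < ⊤ :=
    ae_mono hle (ae_lt_top (hw.pow_const _) hSt)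
  have hcneg : -(p - 1)⁻¹ < 0 := by
    have : (0:ℝ) < (p-1)⁻¹ := inv_pos.2 hp1
    linarith
  have hw0 : ∀ᵐ y ∂(μ.restrict B), w y ≠ 0 := by
    filter_upwards [hσlt] with y hy h0
    rw [h0, ENNReal.zero_rpow_of_neg hcneg] at hy
    exact lt_irrefl _ hy
  -- Hölder
  set q := p / (p - 1) with hq
  have hq0 : q ≠ 0 := by
    rw [hq]; positivity
  have hpq : p.HolderConjugate q := (Real.holderConjugate_iff_eq_conjExponent hp).2 rfl
  have key1 : a ≤ V ^ (1/p) * S' ^ (1/q) := by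
    have heq : ∫⁻ _ in B, (1:ℝ≥0∞) ∂μ
        = ∫⁻ y in B, (fun y => (w y) ^ (1/p)) y * (fun y => ((w y) ^ (-(p - 1)⁻¹)) ^ (1/q)) y ∂μ := by
      refine lintegral_congr_ae ?_
      filter_upwards [hwlt, hw0] with y h1 h2
      have hexp : 1/p + (-(p - 1)⁻¹) * (1/q) = 0 := by
        rw [hq]; field_simp; ring
      calc (1:ℝ≥0∞) = (w y) ^ (0:ℝ) := ENNReal.rpow_zero.symm
        _ = (w y) ^ (1/p + (-(p - 1)⁻¹) * (1/q)) := by rw [hexp]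
        _ = (w y) ^ (1/p) * (w y) ^ ((-(p - 1)⁻¹) * (1/q)) := ENNReal.rpow_add _ _ h2 h1.ne
        _ = (w y) ^ (1/p) * ((w y) ^ (-(p - 1)⁻¹)) ^ (1/q) := by rw [ENNReal.rpow_mul]
    have hold := ENNReal.lintegral_mul_le_Lp_mul_Lq (μ.restrict B) hpq
      (f := fun y => (w y) ^ (1/p : ℝ)) (g := fun y => ((w y) ^ (-(p - 1)⁻¹)) ^ (1/q : ℝ))
      ((hw.pow_const (1/p)).aemeasurable)
      (((hw.pow_const (-(p - 1)⁻¹)).pow_const (1/q)).aemeasurable)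
    have e1 : ∀ y : X, ((w y) ^ (1/p : ℝ)) ^ p = w y := by
      intro y
      rw [← ENNReal.rpow_mul, one_div, inv_mul_cancel₀ hp0.ne', ENNReal.rpow_one]
    have e2 : ∀ y : X, (((w y) ^ (-(p - 1)⁻¹)) ^ (1/q : ℝ)) ^ q = (w y) ^ (-(p - 1)⁻¹) := by
      intro y
      rw [← ENNReal.rpow_mul, one_div, inv_mul_cancel₀ hq0, ENNReal.rpow_one]
    simp only [e1, e2] at hold
    calc a = ∫⁻ _ in B, (1:ℝ≥0∞) ∂μ := (setLIntegral_one B).symm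
      _ = _ := heq
      _ ≤ (∫⁻ y in B, w y ∂μ) ^ (1/p) * (∫⁻ y in B, (w y) ^ (-(p - 1)⁻¹) ∂μ) ^ (1/q) := hold
      _ ≤ V ^ (1/p) * S' ^ (1/q) := by
          rw [← hV]
          exact mul_le_mul_right (ENNReal.rpow_le_rpow (lintegral_mono_set hBB') (by positivity)) _
  have key2 : a ^ p ≤ V * S' ^ (p - 1) := by
    have e1 : ((1:ℝ)/p) * p = 1 := by field_simp
    have e2 : ((1:ℝ)/q) * p = p - 1 := by rw [hq]; field_simp
    calc a ^ p ≤ (V ^ (1/p) * S' ^ (1/q)) ^ p := ENNReal.rpow_le_rpow key1 hp0.le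
      _ = (V ^ (1/p)) ^ p * (S' ^ (1/q)) ^ p := ENNReal.mul_rpow_of_nonneg _ _ hp0.le
      _ = V * S' ^ (p - 1) := by
          rw [← ENNReal.rpow_mul, ← ENNReal.rpow_mul, e1, e2, ENNReal.rpow_one]
  have hpow : a' * a' ^ (p - 1) = a' ^ p := by
    calc a' * a' ^ (p - 1) = a' ^ (1:ℝ) * a' ^ (p - 1) := by rw [ENNReal.rpow_one]
      _ = a' ^ (1 + (p - 1)) := (ENNReal.rpow_add _ _ ha'0' hat').symm
      _ = a' ^ p := by ring_nf
  have ha'p0 : a' ^ p ≠ 0 := by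
    rw [Ne, ENNReal.rpow_eq_zero_iff]; push_neg
    exact ⟨fun h => absurd h ha'0', fun h => absurd h hat'⟩
  have ha'pt : a' ^ p ≠ ⊤ := (ENNReal.rpow_lt_top_of_nonneg hp0.le hat').ne
  have key3 : W' * S' ^ (p - 1) ≤ A * a' ^ p := by
    have expand : (W' / a') * ((S' / a') ^ (p - 1)) = (W' * S' ^ (p - 1)) / (a' ^ p) := by
      rw [ENNReal.div_rpow_of_nonneg _ _ hp1.le, div_eq_mul_inv, div_eq_mul_inv, div_eq_mul_inv,
        ← hpow, ENNReal.mul_inv (Or.inl ha'0') (Or.inl hat'), mul_mul_mul_comm]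
    rw [expand] at hball
    exact (ENNReal.div_le_iff ha'p0 ha'pt).mp hball
  have key4 : a' ^ p ≤ (2 * K) ^ p * a ^ p := by
    have h1 : a' ≤ (2 * K) * a := by
      refine (hbasis.hull_bound B hB).trans ?_
      exact mul_le_mul_left (le_mul_of_one_le_left (zero_le) one_le_two) a
    calc a' ^ p ≤ ((2 * K) * a) ^ p := ENNReal.rpow_le_rpow h1 hp0.le
      _ = (2 * K) ^ p * a ^ p := ENNReal.mul_rpow_of_nonneg _ _ hp0.le
  have hap0 : a ^ p ≠ 0 := by
    rw [Ne, ENNReal.rpow_eq_zero_iff]; push_neg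
    exact ⟨fun h => absurd h ha0.ne', fun h => absurd h hat.ne⟩
  have hapt : a ^ p ≠ ⊤ := (ENNReal.rpow_lt_top_of_nonneg hp0.le hat.ne).ne
  have final : W' * a ^ p ≤ ((2 * K) ^ p * A * V) * a ^ p := by
    calc W' * a ^ p ≤ W' * (V * S' ^ (p - 1)) := mul_le_mul_right key2 W'
      _ = V * (W' * S' ^ (p - 1)) := by ring
      _ ≤ V * (A * a' ^ p) := mul_le_mul_right key3 V
      _ ≤ V * (A * ((2 * K) ^ p * a ^ p)) := by
          exact mul_le_mul_right (mul_le_mul_right key4 A) V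
      _ = ((2 * K) ^ p * A * V) * a ^ p := by ring
  exact (ENNReal.mul_le_mul_iff_left hap0 hapt).mp final

lemma my_tsum_setLIntegral_le {X : Type*} [MeasurableSpace X] (ν : Measure X)
    {ι : Type*} (s : ι → Set X) (hm : ∀ i, MeasurableSet (s i))
    (hd : Pairwise (Function.onFun Disjoint s)) (f : X → ℝ≥0∞) :
    ∑' i, ∫⁻ x in s i, f x ∂ν ≤ ∫⁻ x, f x ∂ν := by
  rw [ENNReal.tsum_eq_iSup_sum]
  refine iSup_le fun F => ?_
  rw [← lintegral_biUnion_finset (hd.set_pairwise _) (fun b _ => hm b) f]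
  exact lintegral_mono' Measure.restrict_le_self le_rfl

/-- Lemma 5.5, inequality (5.8): for an A_p weight w, the
maximal operator M_w associated to the measure w dμ is of weak type (1,1)
with respect to w, with constant (2K)^p [w]_{A_p}. -/

theorem weighted_maximal_weak_type
    {X : Type*} [MeasurableSpace X] (μ : Measure X)
    (𝓑 : Set (Set X)) (hull : Set X → Set X) (K : ℝ≥0∞)
    (hbasis : BallBasis μ 𝓑 hull K)
    (p : ℝ) (hp : 1 < p)
    (w : X → ℝ≥0∞) (hw : Measurable w)
    (hAp : apConst μ 𝓑 p w ≠ ⊤)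
    (f : X → ℝ≥0∞) (l : ℝ≥0∞) (hl : 0 < l) :
    μ.withDensity w {x | l < maxOpW (μ.withDensity w) 𝓑 f x} ≤
      (2 * K) ^ p * apConst μ 𝓑 p w / l *
        ∫⁻ x, f x ∂(μ.withDensity w) := by
  classical
  have hp1 : (0:ℝ) < p - 1 := by linarith
  set ν := μ.withDensity w with hν
  -- trivial case `l = ⊤`
  by_cases hlt : l = ⊤
  · have hempty : {x | l < maxOpW ν 𝓑 f x} = ∅ :=
      eq_empty_of_forall_notMem fun x hx => by
        rw [mem_setOf_eq, hlt] at hx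
        exact not_top_lt hx
    rw [hempty, measure_empty]
    exact zero_le
  -- trivial case `apConst = 0`
  by_cases hA0 : apConst μ 𝓑 p w = 0
  · have hM : ∀ x, maxOpW ν 𝓑 f x = 0 := by
      intro x
      refine le_antisymm (iSup₂_le fun B hB => iSup_le fun _ => ?_) (zero_le)
      have hball : ((∫⁻ y in B, w y ∂μ) / μ B) *
          (((∫⁻ y in B, (w y) ^ (-(p - 1)⁻¹) ∂μ) / μ B) ^ (p - 1))
          ≤ apConst μ 𝓑 p w := by
        unfold apConst
        exact le_biSup (fun B => ((∫⁻ y in B, w y ∂μ) / μ B) *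
          (((∫⁻ y in B, (w y) ^ (-(p - 1)⁻¹) ∂μ) / μ B) ^ (p - 1))) hB
      rw [hA0, le_zero_iff, mul_eq_zero] at hball
      obtain ⟨hμ0, hμt⟩ := hbasis.pos B hB
      have hmB := hbasis.meas B hB
      have hνB : ν B = ∫⁻ y in B, w y ∂μ := withDensity_apply w hmB
      rcases hball with h | h
      · -- numerator vanishes : `ν B = 0`
        rw [ENNReal.div_eq_zero_iff] at h
        rcases h with h | h
        · have hν0 : ν B = 0 := by rw [hνB, h]
          rw [Measure.restrict_eq_zero.mpr hν0, lintegral_zero_measure, ENNReal.zero_div]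
        · exact absurd h hμt.ne
      · -- second factor vanishes : `ν B = ⊤`
        have hS0 : ∫⁻ y in B, (w y) ^ (-(p - 1)⁻¹) ∂μ = 0 := by
          rcases ENNReal.rpow_eq_zero_iff.1 h with ⟨h1, _⟩ | ⟨_, h2⟩
          · rw [ENNReal.div_eq_zero_iff] at h1
            rcases h1 with h1 | h1
            · exact h1
            · exact absurd h1 hμt.ne
          · linarith
        have hνt : ν B = ⊤ := by
          rw [hνB]; exact my_sigma_zero_top μ hp hw hμ0.ne' hS0
        rw [hνt, ENNReal.div_top]
    have hempty : {x | l < maxOpW ν 𝓑 f x} = ∅ :=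
      eq_empty_of_forall_notMem fun x hx => by
        rw [mem_setOf_eq, hM x] at hx
        exact (not_lt_of_ge zero_le) hx
    rw [hempty, measure_empty]
    exact zero_le
  -- nontrivial constants
  have hC0 : (2 * K) ^ p * apConst μ 𝓑 p w ≠ 0 := by
    refine mul_ne_zero ?_ hA0
    intro h
    rcases ENNReal.rpow_eq_zero_iff.1 h with ⟨h1, _⟩ | ⟨_, h2⟩
    · exact (mul_ne_zero two_ne_zero hbasis.K_pos.ne') h1
    · linarith
  have hCl0 : (2 * K) ^ p * apConst μ 𝓑 p w / l ≠ 0 := by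
    rw [Ne, ENNReal.div_eq_zero_iff]
    push_neg
    exact ⟨hC0, hlt⟩
  -- trivial case of infinite integral
  by_cases hI : ∫⁻ x, f x ∂ν = ⊤
  · rw [hI, ENNReal.mul_top hCl0]
    exact le_top
  -- the family of witnessing balls
  set T : Set (Set X) := {B | B ∈ 𝓑 ∧ l * ν B < ∫⁻ x in B, f x ∂ν} with hT
  have hcover : {x | l < maxOpW ν 𝓑 f x} ⊆ ⋃₀ T := by
    intro x hx
    rw [mem_setOf_eq, maxOpW] at hx
    obtain ⟨B, hx⟩ := lt_iSup_iff.mp hx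
    obtain ⟨hB𝓑, hx⟩ := lt_iSup_iff.mp hx
    obtain ⟨hxB, hx⟩ := lt_iSup_iff.mp hx
    have hνB0 : ν B ≠ 0 := by
      intro h
      rw [Measure.restrict_eq_zero.mpr h, lintegral_zero_measure, ENNReal.zero_div] at hx
      exact (not_lt_of_ge zero_le) hx
    have hνBt : ν B ≠ ⊤ := by
      intro h
      rw [h, ENNReal.div_top] at hx
      exact (not_lt_of_ge zero_le) hx
    have := (ENNReal.lt_div_iff_mul_lt (Or.inl hνB0) (Or.inl hνBt)).mp hx
    exact ⟨B, ⟨hB𝓑, this⟩, hxB⟩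
  -- exhaustion by scale
  set s : ℕ → Set X := fun n => ⋃₀ {B ∈ T | μ B ≤ n} with hs
  have hsmono : Monotone s := by
    intro m n hmn
    refine sUnion_subset_sUnion fun B hB => ⟨hB.1, hB.2.trans ?_⟩
    exact_mod_cast Nat.cast_le.mpr hmn
  have hTs : ⋃₀ T ⊆ ⋃ n, s n := by
    rintro x ⟨B, hBT, hxB⟩
    obtain ⟨n, hn⟩ := ENNReal.exists_nat_gt (hbasis.pos B hBT.1).2.ne
    exact mem_iUnion.mpr ⟨n, B, ⟨hBT, hn.le⟩, hxB⟩
  have hstep : ∀ n : ℕ, ν (s n) ≤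
      (2 * K) ^ p * apConst μ 𝓑 p w / l * ∫⁻ x, f x ∂ν := by
    intro n
    set t : Set (Set X) := {B ∈ T | μ B ≤ n} with ht
    obtain ⟨u, hut, hdisj, hcov⟩ :=
      Vitali.exists_disjoint_subfamily_covering_enlargement (id : Set X → Set X) t
        (fun B => (μ B).toReal) 2 one_lt_two (fun a _ => ENNReal.toReal_nonneg) n
        (fun a ha => by
          have := ha.2
          have h1 : μ a ≤ (n : ℝ≥0∞) := this
          calc (μ a).toReal ≤ ((n : ℝ≥0∞)).toReal := ENNReal.toReal_mono (by simp) h1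
            _ = n := by simp)
        (fun a ha => nonempty_of_measure_ne_zero (hbasis.pos a ha.1.1).1.ne')
    have hu𝓑 : ∀ b ∈ u, b ∈ 𝓑 := fun b hb => ((hut hb).1).1
    have hub : ∀ b ∈ u, l * ν b < ∫⁻ x in b, f x ∂ν := fun b hb => ((hut hb).1).2
    have hdisj' : Pairwise (Function.onFun Disjoint fun b : ↥u => (b : Set X)) :=
      fun i j hij => hdisj i.2 j.2 fun h => hij (Subtype.ext h)
    have hmeas' : ∀ b : ↥u, MeasurableSet (b : Set X) := fun b => hbasis.meas _ (hu𝓑 _ b.2)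
    have htsum : ∑' b : ↥u, ∫⁻ x in (b : Set X), f x ∂ν ≤ ∫⁻ x, f x ∂ν :=
      my_tsum_setLIntegral_le ν _ hmeas' hdisj' f
    have hcnt : u.Countable := by
      have hne : ∀ b : ↥u, ∫⁻ x in (b : Set X), f x ∂ν ≠ 0 := fun b =>
        ((zero_le).trans_lt (hub b b.2)).ne'
      have hsupp : (Function.support fun b : ↥u => ∫⁻ x in (b : Set X), f x ∂ν).Countable :=
        Summable.countable_support_ennreal (fun h => hI (top_le_iff.mp (h ▸ htsum)))
      have huniv : (Function.support fun b : ↥u => ∫⁻ x in (b : Set X), f x ∂ν) = Set.univ :=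
        eq_univ_of_forall fun b => hne b
      rw [huniv] at hsupp
      exact Set.countable_coe_iff.mp (Set.countable_univ_iff.mp hsupp)
    have hsub : s n ⊆ ⋃ b ∈ u, hull b := by
      rintro x ⟨a, hat, hxa⟩
      obtain ⟨b, hbu, hab, hsz⟩ := hcov a hat
      have hμa : μ a ≤ 2 * μ b := by
        have hat' : μ a ≠ ⊤ := (hbasis.pos a hat.1.1).2.ne
        have hbt' : μ b ≠ ⊤ := (hbasis.pos b (hu𝓑 b hbu)).2.ne
        rw [← ENNReal.toReal_le_toReal hat' (ENNReal.mul_ne_top (by simp) hbt')]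
        rw [ENNReal.toReal_mul]
        simpa using hsz
      have hsub' : a ⊆ hull b := hbasis.hull_sub b (hu𝓑 b hbu) a hat.1.1 hμa hab
      exact mem_biUnion hbu (hsub' hxa)
    calc ν (s n) ≤ ν (⋃ b ∈ u, hull b) := measure_mono hsub
      _ ≤ ∑' b : ↥u, ν (hull ↑b) := measure_biUnion_le ν hcnt _
      _ ≤ ∑' b : ↥u, (2 * K) ^ p * apConst μ 𝓑 p w * ν ↑b :=
          ENNReal.tsum_le_tsum fun b =>
            my_nu_hull_le μ 𝓑 hull K hbasis hp hw hAp hA0 (hu𝓑 _ b.2)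
      _ = (2 * K) ^ p * apConst μ 𝓑 p w * ∑' b : ↥u, ν ↑b := ENNReal.tsum_mul_left
      _ ≤ (2 * K) ^ p * apConst μ 𝓑 p w *
            ∑' b : ↥u, (∫⁻ x in (b : Set X), f x ∂ν) / l := by
          refine mul_le_mul_right (ENNReal.tsum_le_tsum fun b => ?_) _
          refine (ENNReal.le_div_iff_mul_le (Or.inl hl.ne') (Or.inl hlt)).2 ?_
          rw [mul_comm]
          exact (hub b b.2).le
      _ = (2 * K) ^ p * apConst μ 𝓑 p w *
            ((∑' b : ↥u, ∫⁻ x in (b : Set X), f x ∂ν) / l) := by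
          simp_rw [div_eq_mul_inv, ENNReal.tsum_mul_right]
      _ ≤ (2 * K) ^ p * apConst μ 𝓑 p w * ((∫⁻ x, f x ∂ν) / l) :=
          mul_le_mul_right (ENNReal.div_le_div_right htsum l) _
      _ = (2 * K) ^ p * apConst μ 𝓑 p w / l * ∫⁻ x, f x ∂ν := by
          rw [div_eq_mul_inv, div_eq_mul_inv]; ring
  calc ν {x | l < maxOpW ν 𝓑 f x} ≤ ν (⋃ n, s n) := measure_mono (hcover.trans hTs)
    _ = ⨆ n, ν (s n) := hsmono.measure_iUnion
    _ ≤ (2 * K) ^ p * apConst μ 𝓑 p w / l * ∫⁻ x, f x ∂ν := iSup_le hstep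
end

section
/- Let B be a family of measurable sets in (X,M,μ) satisfying the Besicovitch D-condition. Then the maximal operator M_μ f(x) = sup_{B∋x, B∈B} μ(B)^{-1}∫_B |f| dμ satisfies ‖M_μ‖_{L¹(μ)→L^{1,∞}(μ)} ≤ D and ‖M_μ‖_{L^p(μ)→L^p(μ)} ≤ c_p D^{1/p} for 1 < p < ∞. -/
open MeasureTheory Set ENNReal

/-- The maximal operator associated with a measure and a family of sets. -/
noncomputable def maxOpM {X : Type*} [MeasurableSpace X] (μ : Measure X)
    (𝓑 : Set (Set X)) (f : X → ℝ≥0∞) (x : X) : ℝ≥0∞ :=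
  ⨆ B ∈ 𝓑, ⨆ (_ : x ∈ B), (∫⁻ y in B, f y ∂μ) / μ B

/-- The Besicovitch D-condition: from any subfamily one can extract a
subcollection with the same union and overlap at most D. -/
def BesicovitchCond {X : Type*} (𝓑 : Set (Set X)) (D : ℕ) : Prop :=
  ∀ 𝒜 ⊆ 𝓑, ∃ 𝒜' ⊆ 𝒜, ⋃₀ 𝒜' = ⋃₀ 𝒜 ∧
    ∀ x : X, ({A ∈ 𝒜' | x ∈ A}).encard ≤ (D : ℕ∞)

section Aux
variable {X : Type*} [MeasurableSpace X] {μ : Measure X}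

lemma finset_sum_lintegral_le {ι : Type*} (μ : Measure X) (s : Finset ι) (g : ι → X → ℝ≥0∞) :
    ∑ i ∈ s, ∫⁻ x, g i x ∂μ ≤ ∫⁻ x, ∑ i ∈ s, g i x ∂μ := by
  classical
  induction s using Finset.induction with
  | empty => simp
  | insert a s hnotmem ih =>
    rw [Finset.sum_insert hnotmem]
    refine le_trans (add_le_add_right ih _) ?_
    refine le_trans (le_lintegral_add _ _) (le_of_eq (lintegral_congr fun x => ?_))
    rw [Finset.sum_insert hnotmem]

lemma tsum_lintegral_le {ι : Type*} (μ : Measure X) (g : ι → X → ℝ≥0∞) :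
    ∑' i, ∫⁻ x, g i x ∂μ ≤ ∫⁻ x, ∑' i, g i x ∂μ := by
  refine Summable.tsum_le_of_sum_le ENNReal.summable fun s => ?_
  exact (finset_sum_lintegral_le μ s g).trans
    (lintegral_mono fun x => ENNReal.sum_le_tsum s)

lemma weak_bound (μ : Measure X) (𝓑 : Set (Set X)) (D : ℕ)
    (hmeas : ∀ B ∈ 𝓑, MeasurableSet B) (hB : BesicovitchCond 𝓑 D)
    (f : X → ℝ≥0∞) (t : ℝ≥0∞) (ht : 0 < t) :
    μ {x | t < maxOpM μ 𝓑 f x} ≤ (D : ℝ≥0∞) / t * ∫⁻ x, f x ∂μ := by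
  classical
  rcases eq_or_ne t ⊤ with rfl | htop
  · have he : {x | (⊤:ℝ≥0∞) < maxOpM μ 𝓑 f x} = ∅ := by
      ext x; simp [not_top_lt]
    simp [he]
  set 𝒜 : Set (Set X) := {B ∈ 𝓑 | t < (∫⁻ y in B, f y ∂μ) / μ B} with h𝒜
  obtain ⟨𝒜', h𝒜'𝒜, hU, hover⟩ := hB 𝒜 (sep_subset _ _)
  have hsub : {x | t < maxOpM μ 𝓑 f x} ⊆ ⋃₀ 𝒜' := by
    rw [hU]
    intro x hx
    simp only [mem_setOf_eq, maxOpM, lt_iSup_iff] at hx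
    obtain ⟨B, hB𝓑, hxB, hlt⟩ := hx
    exact ⟨B, ⟨hB𝓑, hlt⟩, hxB⟩
  have hApos : ∀ A ∈ 𝒜, μ A ≠ 0 := by
    intro A hA h0
    have h1 : (∫⁻ y in A, f y ∂μ) = 0 := by
      rw [Measure.restrict_eq_zero.mpr h0, lintegral_zero_measure]
    have := hA.2
    rw [h1, ENNReal.zero_div] at this
    exact not_lt_of_ge ((zero_le : 0 ≤ t)) this
  have hAfin : ∀ A ∈ 𝒜, μ A ≠ ⊤ := by
    intro A hA h0
    have := hA.2
    rw [h0, ENNReal.div_top] at this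
    exact not_lt_of_ge ((zero_le : 0 ≤ t)) this
  have hkey : ∀ A ∈ 𝒜, t * μ A ≤ ∫⁻ y in A, f y ∂μ := fun A hA =>
    le_of_lt ((ENNReal.lt_div_iff_mul_lt (Or.inl (hApos A hA))
      (Or.inl (hAfin A hA))).mp hA.2)
  have hfin : ∀ s : Finset (Set X), ↑s ⊆ 𝒜' →
      ∑ A ∈ s, ∫⁻ y in A, f y ∂μ ≤ (D : ℝ≥0∞) * ∫⁻ x, f x ∂μ := by
    intro s hs
    have hmA : ∀ A ∈ s, MeasurableSet A := fun A hA =>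
      hmeas A (h𝒜'𝒜 (hs hA)).1
    have hpt : ∀ x, ∑ A ∈ s, A.indicator f x ≤ (D : ℝ≥0∞) * f x := by
      intro x
      have hcalc : ∑ A ∈ s, A.indicator f x
          = ((s.filter (fun A => x ∈ A)).card : ℝ≥0∞) * f x := by
        rw [← Finset.sum_filter_add_sum_filter_not s (fun A => x ∈ A)]
        have h2 : ∑ A ∈ s.filter (fun A => ¬ x ∈ A), A.indicator f x = 0 := by
          refine Finset.sum_eq_zero fun A hA => ?_
          simp only [Finset.mem_filter] at hA
          exact indicator_of_notMem hA.2 f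
        have h1 : ∑ A ∈ s.filter (fun A => x ∈ A), A.indicator f x
            = ∑ _A ∈ s.filter (fun A => x ∈ A), f x := by
          refine Finset.sum_congr rfl fun A hA => ?_
          simp only [Finset.mem_filter] at hA
          exact indicator_of_mem hA.2 f
        rw [h2, add_zero, h1, Finset.sum_const, nsmul_eq_mul]
      rw [hcalc]
      refine mul_le_mul_left ?_ _
      have hsubset : (↑(s.filter (fun A => x ∈ A)) : Set (Set X))
          ⊆ {A ∈ 𝒜' | x ∈ A} := by
        intro A hA
        simp only [Finset.coe_filter, mem_setOf_eq] at hA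
        exact ⟨hs hA.1, hA.2⟩
      have := (Set.encard_mono hsubset).trans (hover x)
      rw [Set.encard_coe_eq_coe_finsetCard] at this
      exact_mod_cast Nat.cast_le.mpr (by exact_mod_cast this)
    calc ∑ A ∈ s, ∫⁻ y in A, f y ∂μ
        = ∑ A ∈ s, ∫⁻ x, A.indicator f x ∂μ := by
          refine Finset.sum_congr rfl fun A hA => ?_
          rw [lintegral_indicator (hmA A hA)]
      _ ≤ ∫⁻ x, ∑ A ∈ s, A.indicator f x ∂μ := finset_sum_lintegral_le μ s _
      _ ≤ ∫⁻ x, (D : ℝ≥0∞) * f x ∂μ := lintegral_mono hpt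
      _ = (D : ℝ≥0∞) * ∫⁻ x, f x ∂μ :=
          lintegral_const_mul' _ _ (natCast_ne_top D)
  have htsum : t * ∑' (A : ↥𝒜'), μ ↑A ≤ (D : ℝ≥0∞) * ∫⁻ x, f x ∂μ := by
    rw [← ENNReal.tsum_mul_left]
    refine Summable.tsum_le_of_sum_le ENNReal.summable fun s => ?_
    have h1 : ∑ A ∈ s, t * μ (↑A : Set X) ≤ ∑ A ∈ s, ∫⁻ y in (↑A : Set X), f y ∂μ :=
      Finset.sum_le_sum fun A _ => hkey ↑A (h𝒜'𝒜 A.2)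
    refine h1.trans ?_
    have himg : ∑ B ∈ s.image (Subtype.val),
        ∫⁻ y in B, f y ∂μ = ∑ A ∈ s, ∫⁻ y in (↑A : Set X), f y ∂μ :=
      Finset.sum_image (fun x _ y _ h => Subtype.val_injective h)
    rw [← himg]
    refine hfin _ ?_
    intro B hB'
    simp only [Finset.coe_image, mem_image] at hB'
    obtain ⟨A, _, rfl⟩ := hB'
    exact A.2
  have hle : t * μ {x | t < maxOpM μ 𝓑 f x} ≤ (D : ℝ≥0∞) * ∫⁻ x, f x ∂μ := by
    rcases eq_or_ne (∑' (A : ↥𝒜'), μ ↑A) ⊤ with hS | hS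
    · have : (⊤:ℝ≥0∞) ≤ (D : ℝ≥0∞) * ∫⁻ x, f x ∂μ := by
        rw [hS, ENNReal.mul_top ht.ne'] at htsum; exact htsum
      exact le_trans le_top this
    · have hc : 𝒜'.Countable := by
        have hcs := Summable.countable_support_ennreal hS
        have huniv : (Function.support fun A : ↥𝒜' => μ ↑A) = univ := by
          ext A
          simp only [Function.mem_support, mem_univ, iff_true]
          exact hApos ↑A (h𝒜'𝒜 A.2)
        rw [huniv] at hcs
        have : Countable ↥𝒜' := Set.countable_univ_iff.mp hcs
        exact Set.countable_coe_iff.mp this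
      have hμU : μ (⋃₀ 𝒜') ≤ ∑' (A : ↥𝒜'), μ ↑A := by
        rw [sUnion_eq_biUnion]
        exact measure_biUnion_le μ hc _
      calc t * μ {x | t < maxOpM μ 𝓑 f x} ≤ t * μ (⋃₀ 𝒜') :=
            mul_le_mul_right (measure_mono hsub) _
        _ ≤ t * ∑' (A : ↥𝒜'), μ ↑A := mul_le_mul_right hμU _
        _ ≤ _ := htsum
  have hres : μ {x | t < maxOpM μ 𝓑 f x} ≤ ((D : ℝ≥0∞) * ∫⁻ x, f x ∂μ) / t :=
    (ENNReal.le_div_iff_mul_le (Or.inl ht.ne') (Or.inl htop)).mpr (by rwa [mul_comm] at hle)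
  refine hres.trans (le_of_eq ?_)
  rw [div_eq_mul_inv, div_eq_mul_inv, mul_right_comm]

lemma maxOpM_le_add (μ : Measure X) (𝓑 : Set (Set X)) (f g : X → ℝ≥0∞)
    (c : ℝ≥0∞) (hfg : ∀ y, f y ≤ g y + c) (x : X) :
    maxOpM μ 𝓑 f x ≤ maxOpM μ 𝓑 g x + c := by
  refine iSup₂_le fun B hB𝓑 => iSup_le fun hxB => ?_
  have h1 : (∫⁻ y in B, f y ∂μ) ≤ (∫⁻ y in B, g y ∂μ) + c * μ B := by
    calc ∫⁻ y in B, f y ∂μ ≤ ∫⁻ y in B, g y + c ∂μ := lintegral_mono fun y => hfg y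
      _ = (∫⁻ y in B, g y ∂μ) + c * μ B := by
          rw [lintegral_add_right _ measurable_const, setLIntegral_const]
  calc (∫⁻ y in B, f y ∂μ) / μ B
      ≤ ((∫⁻ y in B, g y ∂μ) + c * μ B) / μ B := ENNReal.div_le_div_right h1 _
    _ = (∫⁻ y in B, g y ∂μ) / μ B + (c * μ B) / μ B := ENNReal.add_div
    _ ≤ maxOpM μ 𝓑 g x + c := by
        refine add_le_add ?_ ?_
        · exact le_iSup₂_of_le B hB𝓑 (le_iSup_of_le hxB le_rfl)
        · rw [mul_div_assoc]
          calc c * (μ B / μ B) ≤ c * 1 :=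
                mul_le_mul_right ENNReal.div_self_le_one _
            _ = c := mul_one c

lemma weak_bound' (μ : Measure X) (𝓑 : Set (Set X)) (D : ℕ)
    (hmeas : ∀ B ∈ 𝓑, MeasurableSet B) (hB : BesicovitchCond 𝓑 D)
    (f : X → ℝ≥0∞) (t : ℝ≥0∞) (ht : 0 < t) :
    μ {x | t < maxOpM μ 𝓑 f x} ≤
      (D : ℝ≥0∞) / (t/2) * ∫⁻ x, ({y | t/2 < f y}).indicator f x ∂μ := by
  set g : X → ℝ≥0∞ := ({y | t/2 < f y}).indicator f with hg
  have hfg : ∀ y, f y ≤ g y + t/2 := by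
    intro y
    by_cases hy : t/2 < f y
    · rw [hg, indicator_of_mem (show y ∈ {y | t/2 < f y} from hy)]; exact le_self_add
    · push_neg at hy
      rw [hg, indicator_of_notMem (show y ∉ {y | t/2 < f y} by simpa using hy)]
      simpa using hy
  have hsub : {x | t < maxOpM μ 𝓑 f x} ⊆ {x | t/2 < maxOpM μ 𝓑 g x} := by
    intro x hx
    simp only [mem_setOf_eq] at hx ⊢
    by_contra h
    push_neg at h
    have h2 : maxOpM μ 𝓑 f x ≤ t :=
      (maxOpM_le_add μ 𝓑 f g (t/2) hfg x).trans
        (by calc maxOpM μ 𝓑 g x + t/2 ≤ t/2 + t/2 := add_le_add_left h _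
              _ = t := ENNReal.add_halves t)
    exact not_lt_of_ge h2 hx
  exact (measure_mono hsub).trans
    (weak_bound μ 𝓑 D hmeas hB g (t/2) (ENNReal.half_pos ht.ne'))

end Aux

section Geom

lemma two_ne_top' : (2:ℝ≥0∞) ≠ ⊤ := ENNReal.ofNat_ne_top

lemma two_rpow_ne_zero (x : ℝ) : (2:ℝ≥0∞) ^ x ≠ 0 :=
  (ENNReal.rpow_pos (by norm_num) two_ne_top').ne'

lemma two_rpow_ne_top (x : ℝ) : (2:ℝ≥0∞) ^ x ≠ ⊤ := by
  rcases le_or_gt 0 x with hx | hx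
  · exact ENNReal.rpow_ne_top_of_nonneg hx two_ne_top'
  · rw [show x = -(-x) by ring, ENNReal.rpow_neg]
    simpa using two_rpow_ne_zero (-x)

lemma two_rpow_mul (x y : ℝ) : (2:ℝ≥0∞) ^ x * (2:ℝ≥0∞) ^ y = (2:ℝ≥0∞) ^ (x + y) :=
  (ENNReal.rpow_add x y (by norm_num) two_ne_top').symm

lemma two_rpow_div_two (x : ℝ) : (2:ℝ≥0∞) ^ x / 2 = (2:ℝ≥0∞) ^ (x - 1) := by
  have h2 : (2:ℝ≥0∞) ^ (x-1) * 2 = (2:ℝ≥0∞) ^ x := by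
    have h := two_rpow_mul (x-1) 1
    rw [ENNReal.rpow_one] at h
    rw [h]
    ring_nf
  rw [← h2, mul_div_assoc, ENNReal.div_self (by norm_num) two_ne_top', mul_one]

lemma geom_aux {p : ℝ} (hp : 1 < p) (a : ℝ≥0∞) :
    ∑' k : ℤ, (if (2:ℝ≥0∞) ^ ((k:ℝ)) / 2 < a then (2:ℝ≥0∞) ^ ((k:ℝ) * (p-1)) else 0)
      ≤ (2:ℝ≥0∞) ^ (p-1) * (1 - (2:ℝ≥0∞) ^ (-(p-1)))⁻¹ * a ^ (p-1) := by
  have hp0 : (0:ℝ) < p - 1 := by linarith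
  rcases eq_or_ne a 0 with rfl | ha0
  · simp
  rcases eq_or_ne a ⊤ with rfl | hat
  · rw [ENNReal.top_rpow_of_pos hp0, ENNReal.mul_top]
    · exact le_top
    · refine mul_ne_zero (two_rpow_ne_zero _) ?_
      rw [Ne, ENNReal.inv_eq_zero]
      exact ((tsub_le_self).trans_lt (lt_top_iff_ne_top.mpr one_ne_top)).ne
  obtain ⟨K, hK1, hK2⟩ := ENNReal.exists_mem_Ioc_zpow ha0 hat one_lt_two two_ne_top'
  set q : ℝ≥0∞ := (2:ℝ≥0∞) ^ (-(p-1)) with hq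
  set c : ℝ≥0∞ := (2:ℝ≥0∞) ^ (((K:ℝ) + 1) * (p-1)) with hc
  set F : ℤ → ℝ≥0∞ := fun k =>
    (if (2:ℝ≥0∞) ^ ((k:ℝ)) / 2 < a then (2:ℝ≥0∞) ^ ((k:ℝ) * (p-1)) else 0) with hF
  have hzpow : ∀ m : ℤ, (2:ℝ≥0∞) ^ m = (2:ℝ≥0∞) ^ ((m:ℤ):ℝ) := fun m =>
    (ENNReal.rpow_intCast 2 m).symm
  have hEq : ∑' k : ℤ, F k = ∑' k : ℤ, F (K + 1 - k) :=
    ((Equiv.subLeft (K + 1)).tsum_eq F).symm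
  have hG : ∀ k : ℤ, F (K + 1 - k) ≤
      (Int.rec (fun n : ℕ => c * q ^ n) (fun _ => 0) k : ℝ≥0∞) := by
    intro k
    induction k using Int.rec with
    | ofNat n =>
      show F (K + 1 - (n:ℤ)) ≤ c * q ^ n
      simp only [hF]
      split
      · rw [hc, hq, ← ENNReal.rpow_natCast ((2:ℝ≥0∞) ^ (-(p-1))) n,
          ← ENNReal.rpow_mul, two_rpow_mul]
        refine le_of_eq ?_
        congr 1
        push_cast
        ring
      · exact zero_le
    | negSucc n =>
      show F (K + 1 - Int.negSucc n) ≤ 0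
      simp only [hF]
      rw [if_neg]
      push_neg
      calc a ≤ (2:ℝ≥0∞) ^ (K + 1) := hK2
        _ ≤ (2:ℝ≥0∞) ^ (((K + 1 - Int.negSucc n : ℤ):ℝ) - 1) := by
            rw [hzpow (K+1)]
            refine ENNReal.rpow_le_rpow_of_exponent_le one_le_two ?_
            push_cast [Int.negSucc_eq]
            linarith [Nat.cast_nonneg (α := ℝ) n]
        _ = (2:ℝ≥0∞) ^ (((K + 1 - Int.negSucc n : ℤ):ℝ)) / 2 :=
            (two_rpow_div_two _).symm
  calc ∑' k : ℤ, F k = ∑' k : ℤ, F (K + 1 - k) := hEq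
    _ ≤ ∑' k : ℤ, (Int.rec (fun n : ℕ => c * q ^ n) (fun _ => 0) k : ℝ≥0∞) :=
        ENNReal.tsum_le_tsum hG
    _ = (∑' n : ℕ, c * q ^ n) + ∑' _n : ℕ, (0:ℝ≥0∞) :=
        tsum_int_rec ENNReal.summable ENNReal.summable
    _ = c * (1 - q)⁻¹ := by rw [tsum_zero, add_zero, ENNReal.tsum_mul_left,
          ENNReal.tsum_geometric]
    _ ≤ (2:ℝ≥0∞) ^ (p-1) * (1 - q)⁻¹ * a ^ (p-1) := by
        rw [mul_right_comm]
        refine mul_le_mul_left ?_ _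
        rw [hc, ENNReal.rpow_mul, ← ENNReal.mul_rpow_of_nonneg _ _ hp0.le]
        refine ENNReal.rpow_le_rpow ?_ hp0.le
        rw [← two_rpow_mul, ENNReal.rpow_one, ← hzpow K, mul_comm]
        exact mul_le_mul_right hK1.le 2

lemma rpow_sub_one_mul_self {p : ℝ} (hp : 1 < p) (a : ℝ≥0∞) :
    a ^ (p-1) * a = a ^ p := by
  rcases eq_or_ne a 0 with rfl | ha0
  · rw [ENNReal.zero_rpow_of_pos (by linarith), ENNReal.zero_rpow_of_pos (by linarith),
      mul_zero]
  rcases eq_or_ne a ⊤ with rfl | hat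
  · rw [ENNReal.top_rpow_of_pos (by linarith), ENNReal.top_rpow_of_pos (by linarith),
      top_mul_top]
  · nth_rewrite 2 [show a = a ^ (1:ℝ) from (ENNReal.rpow_one a).symm]
    rw [← ENNReal.rpow_add _ _ ha0 hat]
    norm_num

lemma pointwise_sum_bound {X : Type*} {p : ℝ} (hp : 1 < p) (f : X → ℝ≥0∞) (x : X) :
    ∑' k : ℤ, (2:ℝ≥0∞) ^ ((k:ℝ) * (p-1)) *
        ({y | (2:ℝ≥0∞) ^ ((k:ℝ)) / 2 < f y}).indicator f x
      ≤ (2:ℝ≥0∞) ^ (p-1) * (1 - (2:ℝ≥0∞) ^ (-(p-1)))⁻¹ * f x ^ p := by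
  have hterm : ∀ k : ℤ, (2:ℝ≥0∞) ^ ((k:ℝ) * (p-1)) *
      ({y | (2:ℝ≥0∞) ^ ((k:ℝ)) / 2 < f y}).indicator f x
      = (if (2:ℝ≥0∞) ^ ((k:ℝ)) / 2 < f x then (2:ℝ≥0∞) ^ ((k:ℝ) * (p-1)) else 0)
        * f x := by
    intro k
    by_cases hx : (2:ℝ≥0∞) ^ ((k:ℝ)) / 2 < f x
    · rw [if_pos hx, indicator_of_mem (show x ∈ {y | (2:ℝ≥0∞) ^ ((k:ℝ)) / 2 < f y} from hx)]
    · rw [if_neg hx, indicator_of_notMem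
        (show x ∉ {y | (2:ℝ≥0∞) ^ ((k:ℝ)) / 2 < f y} from hx), mul_zero, zero_mul]
  calc ∑' k : ℤ, (2:ℝ≥0∞) ^ ((k:ℝ) * (p-1)) *
        ({y | (2:ℝ≥0∞) ^ ((k:ℝ)) / 2 < f y}).indicator f x
      = (∑' k : ℤ, (if (2:ℝ≥0∞) ^ ((k:ℝ)) / 2 < f x
          then (2:ℝ≥0∞) ^ ((k:ℝ) * (p-1)) else 0)) * f x := by
        rw [← ENNReal.tsum_mul_right]
        exact tsum_congr hterm
    _ ≤ ((2:ℝ≥0∞) ^ (p-1) * (1 - (2:ℝ≥0∞) ^ (-(p-1)))⁻¹ * f x ^ (p-1)) * f x :=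
        mul_le_mul_left (geom_aux hp (f x)) _
    _ = (2:ℝ≥0∞) ^ (p-1) * (1 - (2:ℝ≥0∞) ^ (-(p-1)))⁻¹ * f x ^ p := by
        rw [mul_assoc, rpow_sub_one_mul_self hp]

end Geom

section NullTop
variable {X : Type*} [MeasurableSpace X]

lemma indicator_lintegral_bound {p : ℝ} (hp : 1 < p) (μ : Measure X) (f : X → ℝ≥0∞)
    (s : ℝ≥0∞) (hs0 : s ≠ 0) (hst : s ≠ ⊤) :
    ∫⁻ x, ({y | s < f y}).indicator f x ∂μ ≤ s ^ (1-p) * ∫⁻ x, f x ^ p ∂μ := by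
  have hsp : s ^ (1-p) ≠ ⊤ := by
    rw [show (1-p) = -(p-1) by ring, ENNReal.rpow_neg, Ne, ENNReal.inv_eq_top]
    exact (ENNReal.rpow_pos (pos_iff_ne_zero.mpr hs0) hst).ne'
  have hpt : ∀ y, ({y | s < f y}).indicator f y ≤ s ^ (1-p) * f y ^ p := by
    intro y
    by_cases hy : s < f y
    · rw [indicator_of_mem (show y ∈ {y | s < f y} from hy)]
      rcases eq_or_ne (f y) ⊤ with htop | hft
      · rw [htop, ENNReal.top_rpow_of_pos (by linarith),
          ENNReal.mul_top (ENNReal.rpow_pos (pos_iff_ne_zero.mpr hs0) hst).ne']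
      · have hf0 : f y ≠ 0 := (lt_of_le_of_lt ((zero_le : 0 ≤ s)) hy).ne'
        have h1 : f y * s ^ (p-1) ≤ f y ^ p := by
          calc f y * s ^ (p-1) ≤ f y * f y ^ (p-1) :=
                mul_le_mul_right (ENNReal.rpow_le_rpow hy.le (by linarith)) _
            _ = f y ^ p := by rw [mul_comm, rpow_sub_one_mul_self hp]
        calc f y = f y * s ^ (p-1) * s ^ (1-p) := by
              rw [mul_assoc, ← ENNReal.rpow_add _ _ hs0 hst]
              norm_num
          _ ≤ f y ^ p * s ^ (1-p) := mul_le_mul_left h1 _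
          _ = s ^ (1-p) * f y ^ p := mul_comm _ _
    · rw [indicator_of_notMem (show y ∉ {y | s < f y} from hy)]
      exact zero_le
  calc ∫⁻ x, ({y | s < f y}).indicator f x ∂μ
      ≤ ∫⁻ x, s ^ (1-p) * f x ^ p ∂μ := lintegral_mono hpt
    _ = s ^ (1-p) * ∫⁻ x, f x ^ p ∂μ := lintegral_const_mul' _ _ hsp

lemma null_top (μ : Measure X) (𝓑 : Set (Set X)) (D : ℕ)
    (hmeas : ∀ B ∈ 𝓑, MeasurableSet B) (hB : BesicovitchCond 𝓑 D)
    {p : ℝ} (hp : 1 < p) (f : X → ℝ≥0∞) (hI : ∫⁻ x, f x ^ p ∂μ ≠ ⊤)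
    (h : X → ℝ≥0∞) (hh : ∀ x, h x ≤ maxOpM μ 𝓑 f x) :
    μ {x | h x = ⊤} = 0 := by
  set I := ∫⁻ x, f x ^ p ∂μ with hIdef
  set C := (D : ℝ≥0∞) * I with hC
  have hCt : C ≠ ⊤ := ENNReal.mul_ne_top (natCast_ne_top D) hI
  have key : ∀ n : ℕ, 2 ≤ n → μ {x | h x = ⊤} * ((n:ℝ≥0∞)/2) ≤ C := by
    intro n hn
    set s : ℝ≥0∞ := (n:ℝ≥0∞)/2 with hs
    have hs0 : s ≠ 0 := by
      rw [hs, Ne, ENNReal.div_eq_zero_iff]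
      push_neg
      exact ⟨Nat.cast_ne_zero.mpr (by omega), two_ne_top'⟩
    have hst : s ≠ ⊤ := by
      rw [hs]
      exact (ENNReal.div_lt_top (natCast_ne_top n) (by norm_num)).ne
    have hs1 : 1 ≤ s := by
      rw [hs, ENNReal.le_div_iff_mul_le (Or.inl (by norm_num)) (Or.inl two_ne_top'), one_mul]
      exact_mod_cast hn
    have hn0 : (0:ℝ≥0∞) < (n:ℝ≥0∞) := by
      exact_mod_cast Nat.pos_of_ne_zero (by omega)
    have hnt : ((n:ℝ≥0∞)) ≠ ⊤ := natCast_ne_top n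
    have hsub : {x | h x = ⊤} ⊆ {x | (n:ℝ≥0∞) < maxOpM μ 𝓑 f x} := by
      intro x hx
      simp only [mem_setOf_eq] at hx ⊢
      have := hh x
      rw [hx] at this
      rw [top_le_iff.mp this]
      exact lt_top_iff_ne_top.mpr hnt
    have h1 : μ {x | h x = ⊤} ≤ (D:ℝ≥0∞) / s * (s ^ (1-p) * I) := by
      refine (measure_mono hsub).trans ?_
      refine (weak_bound' μ 𝓑 D hmeas hB f (n:ℝ≥0∞) hn0).trans ?_
      exact mul_le_mul_right (indicator_lintegral_bound hp μ f s hs0 hst) _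
    -- multiply both sides by s ^ p
    have h2 : μ {x | h x = ⊤} * s ^ p ≤ C := by
      have hrw : (D:ℝ≥0∞) / s * (s ^ (1-p) * I) * s ^ p = C := by
        rw [hC, div_eq_mul_inv, ← ENNReal.rpow_neg_one s]
        calc (D:ℝ≥0∞) * s ^ (-1:ℝ) * (s ^ (1-p) * I) * s ^ p
            = (D:ℝ≥0∞) * I * (s ^ (-1:ℝ) * s ^ (1-p) * s ^ p) := by ring
          _ = (D:ℝ≥0∞) * I * (s ^ ((-1) + (1-p) + p)) := by
              rw [← ENNReal.rpow_add _ _ hs0 hst, ← ENNReal.rpow_add _ _ hs0 hst]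
          _ = (D:ℝ≥0∞) * I := by
              rw [show (-1:ℝ) + (1-p) + p = 0 by ring, ENNReal.rpow_zero, mul_one]
      rw [← hrw]
      exact mul_le_mul_left h1 _
    refine le_trans ?_ h2
    refine mul_le_mul_right ?_ _
    calc s = s ^ (1:ℝ) := (ENNReal.rpow_one s).symm
      _ ≤ s ^ p := ENNReal.rpow_le_rpow_of_exponent_le hs1 (by linarith)
  by_contra hne
  have hEt : μ {x | h x = ⊤} ≠ ⊤ := by
    intro htop
    have := key 2 le_rfl
    rw [htop] at this
    simp only [Nat.cast_ofNat] at this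
    rw [ENNReal.div_self (by norm_num) two_ne_top', mul_one] at this
    exact hCt (top_le_iff.mp this)
  obtain ⟨n, hn⟩ := ENNReal.exists_nat_gt
    (show 2 * C / μ {x | h x = ⊤} ≠ ⊤ from
      (ENNReal.div_lt_top (ENNReal.mul_ne_top two_ne_top' hCt) hne).ne)
  have hn2 : 2 * C / μ {x | h x = ⊤} < ((n+2 : ℕ):ℝ≥0∞) := by
    exact hn.trans_le (Nat.cast_le.mpr (by omega))
  rw [ENNReal.div_lt_iff (Or.inl hne) (Or.inl hEt)] at hn2
  have hkey := key (n+2) (by omega)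
  have : μ {x | h x = ⊤} * ((n+2:ℕ):ℝ≥0∞) ≤ 2 * C := by
    have := mul_le_mul_left hkey 2
    rwa [mul_assoc, ENNReal.div_mul_cancel (by norm_num) two_ne_top', mul_comm C 2] at this
  rw [mul_comm] at this
  exact absurd (hn2.trans_le this) (lt_irrefl _)

end NullTop

section Strong
variable {X : Type*} [MeasurableSpace X]

lemma strong_core (μ : Measure X) (𝓑 : Set (Set X)) (D : ℕ)
    (hmeas : ∀ B ∈ 𝓑, MeasurableSet B) (hB : BesicovitchCond 𝓑 D)
    {p : ℝ} (hp : 1 < p) (f : X → ℝ≥0∞) (hI : ∫⁻ x, f x ^ p ∂μ ≠ ⊤) :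
    ∫⁻ x, (maxOpM μ 𝓑 f x) ^ p ∂μ ≤
      (2:ℝ≥0∞) ^ (p+1) * ((2:ℝ≥0∞) ^ (p-1) * (1 - (2:ℝ≥0∞) ^ (-(p-1)))⁻¹) * D *
        ∫⁻ x, f x ^ p ∂μ := by
  have hp0 : (0:ℝ) < p := by linarith
  set Cg : ℝ≥0∞ := (2:ℝ≥0∞) ^ (p-1) * (1 - (2:ℝ≥0∞) ^ (-(p-1)))⁻¹ with hCg
  have hq1 : (2:ℝ≥0∞) ^ (-(p-1)) < 1 := by
    have := ENNReal.rpow_lt_rpow_of_exponent_lt (x := (2:ℝ≥0∞)) one_lt_two two_ne_top'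
      (show -(p-1) < 0 by linarith)
    rwa [ENNReal.rpow_zero] at this
  have hCgt : Cg ≠ ⊤ := by
    refine ENNReal.mul_ne_top (two_rpow_ne_top _) ?_
    rw [Ne, ENNReal.inv_eq_top, tsub_eq_zero_iff_le]
    exact not_le_of_gt hq1
  obtain ⟨g₀, hg₀m, hg₀le, hg₀eq⟩ :=
    exists_measurable_le_lintegral_eq μ (fun x => maxOpM μ 𝓑 f x ^ p)
  set h : X → ℝ≥0∞ := fun x => g₀ x ^ (1/p) with hh
  have hhm : Measurable h := hg₀m.pow measurable_const
  have hhp : ∀ x, h x ^ p = g₀ x := by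
    intro x
    rw [hh, ← ENNReal.rpow_mul, one_div, inv_mul_cancel₀ hp0.ne', ENNReal.rpow_one]
  have hhle : ∀ x, h x ≤ maxOpM μ 𝓑 f x := by
    intro x
    calc h x = g₀ x ^ (1/p) := rfl
      _ ≤ (maxOpM μ 𝓑 f x ^ p) ^ (1/p) :=
          ENNReal.rpow_le_rpow (hg₀le x) (by positivity)
      _ = maxOpM μ 𝓑 f x := by
          rw [← ENNReal.rpow_mul, mul_one_div_cancel hp0.ne', ENNReal.rpow_one]
  have hEq : ∫⁻ x, maxOpM μ 𝓑 f x ^ p ∂μ = ∫⁻ x, h x ^ p ∂μ := by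
    rw [hg₀eq]
    exact lintegral_congr fun x => (hhp x).symm
  set E : Set X := {x | h x = ⊤} with hE
  have hE0 : μ E = 0 := null_top μ 𝓑 D hmeas hB hp f hI h hhle
  have hEm : MeasurableSet E := hhm (measurableSet_singleton ⊤)
  set T : ℤ → ℝ≥0∞ := fun k => (2:ℝ≥0∞) ^ ((k:ℝ)) with hT
  set S : ℤ → Set X := fun k => {x | T k < h x ∧ h x ≤ T (k+1)} with hS
  have hSm : ∀ k, MeasurableSet (S k) := by
    intro k
    have : S k = h ⁻¹' (Ioc (T k) (T (k+1))) := rfl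
    rw [this]
    exact hhm measurableSet_Ioc
  have hTpos : ∀ k : ℤ, 0 < T k := fun k => ENNReal.rpow_pos (by norm_num) two_ne_top'
  set J : ℤ → ℝ≥0∞ := fun k => ∫⁻ x, ({y | T k / 2 < f y}).indicator f x ∂μ with hJ
  have claimA : ∀ x, h x ^ p ≤
      (∑' k : ℤ, (S k).indicator (fun _ => (2:ℝ≥0∞) ^ (((k:ℝ)+1)*p)) x)
        + E.indicator (fun _ => (⊤:ℝ≥0∞)) x := by
    intro x
    rcases eq_or_ne (h x) ⊤ with hx | hx
    · rw [indicator_of_mem (show x ∈ E from hx)]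
      exact le_of_le_of_eq le_top (add_top _).symm
    rcases eq_or_ne (h x) 0 with hx0 | hx0
    · rw [hx0, ENNReal.zero_rpow_of_pos hp0]
      exact zero_le
    obtain ⟨K, hK1, hK2⟩ := ENNReal.exists_mem_Ioc_zpow hx0 hx one_lt_two two_ne_top'
    have hTK : T K = (2:ℝ≥0∞) ^ (K:ℤ) := ENNReal.rpow_intCast 2 K
    have hTK1 : T (K+1) = (2:ℝ≥0∞) ^ ((K+1:ℤ)) := ENNReal.rpow_intCast 2 (K+1)
    have hmem : x ∈ S K := by
      constructor
      · rw [hTK]; exact hK1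
      · rw [hTK1]; exact hK2
    have hstep : h x ^ p ≤ (2:ℝ≥0∞) ^ (((K:ℝ)+1)*p) := by
      have h1 : h x ≤ (2:ℝ≥0∞) ^ ((K:ℝ)+1) := by
        refine hK2.trans (le_of_eq ?_)
        rw [← ENNReal.rpow_intCast 2 (K+1)]
        push_cast
        ring_nf
      calc h x ^ p ≤ ((2:ℝ≥0∞) ^ ((K:ℝ)+1)) ^ p := ENNReal.rpow_le_rpow h1 hp0.le
        _ = (2:ℝ≥0∞) ^ (((K:ℝ)+1)*p) := (ENNReal.rpow_mul 2 _ _).symm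
    refine hstep.trans (le_trans ?_ le_self_add)
    have : (2:ℝ≥0∞) ^ (((K:ℝ)+1)*p)
        = (S K).indicator (fun _ => (2:ℝ≥0∞) ^ (((K:ℝ)+1)*p)) x := by
      rw [indicator_of_mem hmem]
    rw [this]
    exact ENNReal.le_tsum K
  have hμS : ∀ k : ℤ, μ (S k) ≤ (D:ℝ≥0∞) / (T k / 2) * J k := by
    intro k
    have hsub : S k ⊆ {x | T k < maxOpM μ 𝓑 f x} := by
      intro x hx
      exact lt_of_lt_of_le hx.1 (hhle x)
    exact (measure_mono hsub).trans (weak_bound' μ 𝓑 D hmeas hB f (T k) (hTpos k))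
  have hco : ∀ k : ℤ, (2:ℝ≥0∞) ^ (((k:ℝ)+1)*p) * ((D:ℝ≥0∞) / (T k / 2) * J k)
      = (D:ℝ≥0∞) * (2:ℝ≥0∞) ^ (p+1) * ((2:ℝ≥0∞) ^ ((k:ℝ)*(p-1)) * J k) := by
    intro k
    rw [show T k / 2 = (2:ℝ≥0∞) ^ ((k:ℝ)-1) from two_rpow_div_two _,
      div_eq_mul_inv, ← ENNReal.rpow_neg]
    calc (2:ℝ≥0∞) ^ (((k:ℝ)+1)*p) * ((D:ℝ≥0∞) * (2:ℝ≥0∞) ^ (-((k:ℝ)-1)) * J k)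
        = (D:ℝ≥0∞) * ((2:ℝ≥0∞) ^ (((k:ℝ)+1)*p) * (2:ℝ≥0∞) ^ (-((k:ℝ)-1))) * J k := by
          ring
      _ = (D:ℝ≥0∞) * (2:ℝ≥0∞) ^ ((p+1) + (k:ℝ)*(p-1)) * J k := by
          rw [two_rpow_mul]
          ring_nf
      _ = (D:ℝ≥0∞) * (2:ℝ≥0∞) ^ (p+1) * ((2:ℝ≥0∞) ^ ((k:ℝ)*(p-1)) * J k) := by
          rw [← two_rpow_mul]
          ring
  calc ∫⁻ x, maxOpM μ 𝓑 f x ^ p ∂μ = ∫⁻ x, h x ^ p ∂μ := hEq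
    _ ≤ ∫⁻ x, ((∑' k : ℤ, (S k).indicator (fun _ => (2:ℝ≥0∞) ^ (((k:ℝ)+1)*p)) x)
          + E.indicator (fun _ => (⊤:ℝ≥0∞)) x) ∂μ := lintegral_mono claimA
    _ = (∫⁻ x, ∑' k : ℤ, (S k).indicator (fun _ => (2:ℝ≥0∞) ^ (((k:ℝ)+1)*p)) x ∂μ)
          + ∫⁻ x, E.indicator (fun _ => (⊤:ℝ≥0∞)) x ∂μ :=
        lintegral_add_right _ (measurable_const.indicator hEm)
    _ = ∑' k : ℤ, (2:ℝ≥0∞) ^ (((k:ℝ)+1)*p) * μ (S k) := by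
        rw [lintegral_indicator hEm, setLIntegral_const, hE0, mul_zero, add_zero,
          lintegral_tsum fun k => (measurable_const.indicator (hSm k)).aemeasurable]
        refine tsum_congr fun k => ?_
        rw [lintegral_indicator (hSm k), setLIntegral_const]
    _ ≤ ∑' k : ℤ, (2:ℝ≥0∞) ^ (((k:ℝ)+1)*p) * ((D:ℝ≥0∞) / (T k / 2) * J k) :=
        ENNReal.tsum_le_tsum fun k => mul_le_mul_right (hμS k) _
    _ = (D:ℝ≥0∞) * (2:ℝ≥0∞) ^ (p+1) * ∑' k : ℤ, (2:ℝ≥0∞) ^ ((k:ℝ)*(p-1)) * J k := by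
        rw [← ENNReal.tsum_mul_left]
        exact tsum_congr hco
    _ ≤ (D:ℝ≥0∞) * (2:ℝ≥0∞) ^ (p+1) * (Cg * ∫⁻ x, f x ^ p ∂μ) := by
        refine mul_le_mul_right ?_ _
        calc ∑' k : ℤ, (2:ℝ≥0∞) ^ ((k:ℝ)*(p-1)) * J k
            = ∑' k : ℤ, ∫⁻ x, (2:ℝ≥0∞) ^ ((k:ℝ)*(p-1)) *
                ({y | T k / 2 < f y}).indicator f x ∂μ := by
              refine tsum_congr fun k => ?_
              rw [hJ, ← lintegral_const_mul' _ _ (two_rpow_ne_top _)]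
          _ ≤ ∫⁻ x, ∑' k : ℤ, (2:ℝ≥0∞) ^ ((k:ℝ)*(p-1)) *
                ({y | T k / 2 < f y}).indicator f x ∂μ := tsum_lintegral_le μ _
          _ ≤ ∫⁻ x, Cg * f x ^ p ∂μ := by
              refine lintegral_mono fun x => ?_
              rw [hCg]
              simp only [hT]
              exact pointwise_sum_bound hp f x
          _ = Cg * ∫⁻ x, f x ^ p ∂μ := lintegral_const_mul' _ _ hCgt
    _ = (2:ℝ≥0∞) ^ (p+1) * Cg * (D:ℝ≥0∞) * ∫⁻ x, f x ^ p ∂μ := by ring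

end Strong


/-- Theorem 6.3: under the Besicovitch D-condition, the
maximal operator satisfies ‖M_μ‖_{L¹→L^{1,∞}} ≤ D and
‖M_μ‖_{L^p→L^p} ≤ c_p D^{1/p}, where c_p depends only on p. -/
theorem besicovitch_maximal_bounds (p : ℝ) (hp : 1 < p) :
    ∃ c : ℝ≥0∞, 0 < c ∧ c ≠ ⊤ ∧
      ∀ (X : Type) [MeasurableSpace X],
        ∀ (μ : Measure X) (𝓑 : Set (Set X)) (D : ℕ),
          (∀ B ∈ 𝓑, MeasurableSet B) →
          BesicovitchCond 𝓑 D →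
          (∀ (f : X → ℝ≥0∞) (t : ℝ≥0∞), 0 < t →
              μ {x | t < maxOpM μ 𝓑 f x} ≤ (D : ℝ≥0∞) / t * ∫⁻ x, f x ∂μ) ∧
          ∀ f : X → ℝ≥0∞,
            (∫⁻ x, (maxOpM μ 𝓑 f x) ^ p ∂μ) ^ (1 / p) ≤
              c * (D : ℝ≥0∞) ^ (1 / p) * (∫⁻ x, f x ^ p ∂μ) ^ (1 / p) := by
  have hp0 : (0:ℝ) < p := by linarith
  have h1p : (0:ℝ) < 1/p := by positivity
  set q : ℝ≥0∞ := (2:ℝ≥0∞) ^ (-(p-1)) with hq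
  set bigC : ℝ≥0∞ := (2:ℝ≥0∞) ^ (p+1) * ((2:ℝ≥0∞) ^ (p-1) * (1 - q)⁻¹) with hbigC
  have hq1 : q < 1 := by
    have := ENNReal.rpow_lt_rpow_of_exponent_lt (x := (2:ℝ≥0∞)) one_lt_two two_ne_top'
      (show -(p-1) < 0 by linarith)
    rwa [ENNReal.rpow_zero] at this
  have h1q0 : (1:ℝ≥0∞) - q ≠ 0 := by
    rw [Ne, tsub_eq_zero_iff_le]
    exact not_le_of_gt hq1
  have h1qt : (1:ℝ≥0∞) - q ≠ ⊤ :=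
    (tsub_le_self.trans_lt (lt_top_iff_ne_top.mpr one_ne_top)).ne
  have hbigC0 : bigC ≠ 0 :=
    mul_ne_zero (two_rpow_ne_zero _)
      (mul_ne_zero (two_rpow_ne_zero _) (ENNReal.inv_ne_zero.mpr h1qt))
  have hbigCt : bigC ≠ ⊤ :=
    ENNReal.mul_ne_top (two_rpow_ne_top _)
      (ENNReal.mul_ne_top (two_rpow_ne_top _) (ENNReal.inv_ne_top.mpr h1q0))
  refine ⟨bigC ^ (1/p), ENNReal.rpow_pos (pos_iff_ne_zero.mpr hbigC0) hbigCt,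
    ENNReal.rpow_ne_top_of_nonneg h1p.le hbigCt, ?_⟩
  intro X _ μ 𝓑 D hmeas hB
  refine ⟨fun f t ht => weak_bound μ 𝓑 D hmeas hB f t ht, ?_⟩
  intro f
  rcases eq_or_ne D 0 with rfl | hD
  · obtain ⟨𝒜', hsub, hU, hover⟩ := hB 𝓑 subset_rfl
    have hA'empty : ∀ x : X, x ∉ ⋃₀ 𝒜' := by
      intro x hx
      obtain ⟨A, hA, hxA⟩ := hx
      have h0 := hover x
      rw [Nat.cast_zero, nonpos_iff_eq_zero, Set.encard_eq_zero] at h0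
      exact absurd (show A ∈ {A ∈ 𝒜' | x ∈ A} from ⟨hA, hxA⟩)
        (by rw [h0]; exact notMem_empty A)
    have hM : ∀ x, maxOpM μ 𝓑 f x = 0 := by
      intro x
      refine le_antisymm (iSup₂_le fun B hBm => iSup_le fun hxB => ?_) (zero_le)
      exfalso
      refine hA'empty x ?_
      rw [hU]
      exact ⟨B, hBm, hxB⟩
    have hzero : ∫⁻ x, maxOpM μ 𝓑 f x ^ p ∂μ = 0 := by
      have : ∀ x, maxOpM μ 𝓑 f x ^ p = 0 := fun x => by
        rw [hM x, ENNReal.zero_rpow_of_pos hp0]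
      rw [lintegral_congr this, lintegral_zero]
    rw [hzero, ENNReal.zero_rpow_of_pos h1p]
    exact zero_le
  rcases eq_or_ne (∫⁻ x, f x ^ p ∂μ) ⊤ with hI | hI
  · rw [hI, ENNReal.top_rpow_of_pos h1p, ENNReal.mul_top]
    · exact le_top
    · refine mul_ne_zero (ENNReal.rpow_pos (pos_iff_ne_zero.mpr hbigC0) hbigCt).ne' ?_
      refine (ENNReal.rpow_pos ?_ (natCast_ne_top D)).ne'
      exact_mod_cast Nat.pos_of_ne_zero hD
  · have hcore := strong_core μ 𝓑 D hmeas hB hp f hI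
    have h2 := ENNReal.rpow_le_rpow hcore h1p.le
    refine h2.trans (le_of_eq ?_)
    rw [ENNReal.mul_rpow_of_nonneg _ _ h1p.le, ENNReal.mul_rpow_of_nonneg _ _ h1p.le]
end

section
/- Let (X,ρ,M,μ) be a space of homogeneous type. Then for every ball B = B(x₀,r) there exists R with 2r ≤ R ≤ ∞ such that the ball B* = B(x₀,R) satisfies (i) every ball A with μ(A) ≤ 2μ(B) and A ∩ B ≠ ∅ is contained in B*, and (ii) μ(B*) ≤ C·μ(B), where C depends only on the doubling constant H and quasi-triangle constant D. -/
open MeasureTheory Set ENNReal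

/-- Lemma 7.5: in a space of homogeneous type every ball
B = B(x₀,r) has a hull B* = B(x₀,R) with 2r ≤ R ≤ ∞ (B(x₀,∞) = X), i.e.
B* contains every ball A with μ(A) ≤ 2μ(B) meeting B, and μ(B*) ≤ C μ(B)
with C depending only on the doubling constant H and the quasi-triangle
constant D. -/
theorem homogeneous_hull_exists (D H : ℝ) (hD : 1 < D) (hH : 0 < H) :
    ∃ C : ℝ≥0∞, 0 < C ∧ C ≠ ⊤ ∧
      ∀ (X : Type) [MeasurableSpace X],
        ∀ (μ : Measure X) (ρ : X → X → ℝ),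
          (∀ x y, 0 ≤ ρ x y) →
          (∀ x y, ρ x y = 0 ↔ x = y) →
          (∀ x y, ρ x y = ρ y x) →
          (∀ x y z, ρ x y ≤ D * (ρ x z + ρ z y)) →
          (∀ (x : X) (r : ℝ), MeasurableSet {y | ρ x y < r}) →
          (∀ (x : X) (r : ℝ), 0 < r →
            μ {y | ρ x y < 2 * r} ≤ ENNReal.ofReal H * μ {y | ρ x y < r}) →
          ∀ (x₀ : X) (r : ℝ), 0 < r →
            ∃ Bstar : Set X,
              ((∃ R : ℝ, 2 * r ≤ R ∧ Bstar = {y | ρ x₀ y < R}) ∨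
                Bstar = Set.univ) ∧
              (∀ (c : X) (s : ℝ), 0 < s →
                μ {y | ρ c y < s} ≤ 2 * μ {y | ρ x₀ y < r} →
                ({y | ρ c y < s} ∩ {y | ρ x₀ y < r}).Nonempty →
                {y | ρ c y < s} ⊆ Bstar) ∧
              μ Bstar ≤ C * μ {y | ρ x₀ y < r} := by
  obtain ⟨m, hm⟩ : ∃ m : ℕ, 6 * D ^ 2 ≤ (2 : ℝ) ^ m := by
    obtain ⟨m, hm⟩ := pow_unbounded_of_one_lt (6 * D ^ 2) (one_lt_two : (1:ℝ) < 2)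
    exact ⟨m, hm.le⟩
  set K : ℝ≥0∞ := ENNReal.ofReal H ⊔ 1 with hK
  have hK1 : (1 : ℝ≥0∞) ≤ K := le_sup_right
  have hKtop : K ≠ ⊤ := by simp [hK]
  have hKm1 : (1 : ℝ≥0∞) ≤ K ^ m := one_le_pow_of_one_le' hK1 m
  refine ⟨K ^ m * (2 * K ^ m + K ^ 2), ?_, ?_, ?_⟩
  · exact lt_of_lt_of_le one_pos (le_mul_of_le_of_one_le hKm1 (le_trans hKm1 (by
      calc K ^ m ≤ 2 * K ^ m := by exact le_mul_of_one_le_left' one_le_two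
        _ ≤ 2 * K ^ m + K ^ 2 := le_self_add)))
  · exact ENNReal.mul_ne_top (pow_ne_top hKtop)
      (ENNReal.add_ne_top.2 ⟨ENNReal.mul_ne_top (by simp) (pow_ne_top hKtop), pow_ne_top hKtop⟩)
  intro X _ μ ρ hnn hzero hsymm htri hmeas hdoub x₀ r hr
  set C₀ : ℝ≥0∞ := 2 * K ^ m + K ^ 2 with hC₀
  have hC₀le : C₀ ≤ K ^ m * C₀ := le_mul_of_one_le_left' hKm1
  -- iterated doubling
  have hiter : ∀ (k : ℕ) (c : X) (u : ℝ), 0 < u →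
      μ {y | ρ c y < 2 ^ k * u} ≤ K ^ k * μ {y | ρ c y < u} := by
    intro k
    induction k with
    | zero => intro c u hu; simp
    | succ k ih =>
      intro c u hu
      have h1 : ((2:ℝ) ^ (k+1)) * u = 2 * (2 ^ k * u) := by ring
      rw [h1]
      calc μ {y | ρ c y < 2 * (2 ^ k * u)}
          ≤ ENNReal.ofReal H * μ {y | ρ c y < 2 ^ k * u} := hdoub c _ (by positivity)
        _ ≤ K * (K ^ k * μ {y | ρ c y < u}) := mul_le_mul' le_sup_left (ih c u hu)
        _ = K ^ (k+1) * μ {y | ρ c y < u} := by rw [pow_succ]; ring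
  have hmono : ∀ (c : X) (t t' : ℝ), t ≤ t' → {y | ρ c y < t} ⊆ {y | ρ c y < t'} :=
    fun c t t' h y hy => lt_of_lt_of_le hy h
  have hcomp : ∀ (k : ℕ) (c : X) (v u : ℝ), 0 < u → v ≤ 2 ^ k * u →
      μ {y | ρ c y < v} ≤ K ^ k * μ {y | ρ c y < u} :=
    fun k c v u hu hv => le_trans (measure_mono (hmono c v _ hv)) (hiter k c u hu)
  set B : ℝ≥0∞ := μ {y | ρ x₀ y < r} with hB
  set T : Set ℝ := {t : ℝ | 4 * r ≤ t ∧ C₀ * B < μ {y | ρ x₀ y < t}} with hT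
  by_cases hTne : T.Nonempty
  · -- Case: some large ball exceeds C₀ * B
    have hbdd : BddBelow T := ⟨4 * r, fun t ht => ht.1⟩
    have ht₀ : 4 * r ≤ sInf T := le_csInf hTne fun t ht => ht.1
    obtain ⟨t₁, ht₁T, ht₁lt⟩ := exists_lt_of_csInf_lt hTne
      (lt_add_of_pos_right (sInf T) hr)
    have ht₁4r : 4 * r ≤ t₁ := ht₁T.1
    have ht₁pos : 0 < t₁ := by linarith
    have hDpos : 0 < D := by linarith
    refine ⟨{y | ρ x₀ y < 3 * D ^ 2 * t₁}, Or.inl ⟨3 * D ^ 2 * t₁, by nlinarith [mul_nonneg (by nlinarith : (0:ℝ) ≤ D ^ 2 - 1) ht₁pos.le], rfl⟩, ?_, ?_⟩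
    · -- containment property
      intro c s hs hμA ⟨z, hzA, hzB⟩
      simp only [mem_setOf_eq] at hzA hzB
      have hcx₀ : ρ c x₀ < D * (r + s) := by
        calc ρ c x₀ ≤ D * (ρ c z + ρ z x₀) := htri c x₀ z
          _ = D * (ρ c z + ρ x₀ z) := by rw [hsymm z x₀]
          _ < D * (r + s) := by
              have := hnn c z; have := hnn x₀ z
              nlinarith
      have hst₁ : s < t₁ := by
        by_contra hst
        push_neg at hst
        have hrs : r ≤ s := by linarith
        -- B(x₀,t₁) ⊆ B(c, 2^m * s)
        have hsub : {y | ρ x₀ y < t₁} ⊆ {y | ρ c y < 2 ^ m * s} := by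
          intro y hy
          simp only [mem_setOf_eq] at hy ⊢
          have h1 : ρ c y ≤ D * (ρ c x₀ + ρ x₀ y) := htri c y x₀
          have h2 : (2:ℝ) ^ m * s ≥ 6 * D ^ 2 * s :=
            mul_le_mul_of_nonneg_right hm hs.le
          nlinarith [mul_lt_mul_of_pos_left (add_lt_add hcx₀ hy) hDpos,
            mul_nonneg (sub_nonneg.2 hrs) (sq_nonneg D),
            mul_nonneg (sub_nonneg.2 hst) hDpos.le,
            mul_nonneg (mul_pos hDpos hs).le (by linarith : (0:ℝ) ≤ D - 1),
            mul_nonneg (sq_nonneg D) hs.le]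
        have hcontr : μ {y | ρ x₀ y < t₁} ≤ C₀ * B := by
          calc μ {y | ρ x₀ y < t₁} ≤ μ {y | ρ c y < 2 ^ m * s} := measure_mono hsub
            _ ≤ K ^ m * μ {y | ρ c y < s} := hiter m c s hs
            _ ≤ K ^ m * (2 * B) := mul_le_mul' le_rfl hμA
            _ = 2 * K ^ m * B := by ring
            _ ≤ C₀ * B := mul_le_mul' le_self_add le_rfl
        exact absurd (lt_of_le_of_lt hcontr ht₁T.2) (lt_irrefl _)
      intro y hy
      simp only [mem_setOf_eq] at hy ⊢
      have h1 : ρ x₀ y ≤ D * (ρ x₀ c + ρ c y) := htri x₀ y c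
      have h2 : ρ x₀ c < D * (r + s) := by rw [hsymm x₀ c]; exact hcx₀
      have hrt₁ : r < t₁ := by linarith
      nlinarith [mul_lt_mul_of_pos_left (add_lt_add h2 hy) hDpos,
        mul_lt_mul_of_pos_left hrt₁ (mul_pos hDpos hDpos),
        mul_lt_mul_of_pos_left hst₁ (mul_pos hDpos hDpos),
        mul_nonneg hs.le (by nlinarith : (0:ℝ) ≤ D ^ 2 - D)]
    · -- measure bound
      set u : ℝ := 3 * D ^ 2 * t₁ / 2 ^ m with hu
      have h2m : (0:ℝ) < 2 ^ m := by positivity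
      have hupos : 0 < u := by positivity
      have hueq : 3 * D ^ 2 * t₁ ≤ 2 ^ m * u := by rw [hu]; field_simp; exact le_rfl
      have h1 : μ {y | ρ x₀ y < 3 * D ^ 2 * t₁} ≤ K ^ m * μ {y | ρ x₀ y < u} :=
        hcomp m x₀ _ u hupos hueq
      have hult₀ : u < sInf T := by
        have hu2 : u ≤ t₁ / 2 := by
          rw [hu, div_le_div_iff₀ h2m two_pos]
          nlinarith
        have : t₁ < sInf T + r := ht₁lt
        have hrt₀ : 4 * r ≤ sInf T := ht₀
        linarith
      have huT : u ∉ T := notMem_of_lt_csInf hult₀ hbdd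
      have h2 : μ {y | ρ x₀ y < u} ≤ C₀ * B := by
        by_cases h4r : 4 * r ≤ u
        · refine le_of_not_gt fun h => huT ⟨h4r, h⟩
        · push_neg at h4r
          have : μ {y | ρ x₀ y < u} ≤ K ^ 2 * B := by
            refine hcomp 2 x₀ u r hr ?_
            norm_num; linarith
          exact le_trans this (mul_le_mul' le_add_self le_rfl)
      calc μ {y | ρ x₀ y < 3 * D ^ 2 * t₁} ≤ K ^ m * (C₀ * B) :=
            le_trans h1 (mul_le_mul' le_rfl h2)
        _ = K ^ m * C₀ * B := by rw [mul_assoc]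
  · -- Case: all balls have measure ≤ C₀ * B : take Bstar = univ
    refine ⟨Set.univ, Or.inr rfl, fun c s _ _ _ => subset_univ _, ?_⟩
    have hall : ∀ t : ℝ, 4 * r ≤ t → μ {y | ρ x₀ y < t} ≤ C₀ * B :=
      fun t ht => le_of_not_gt fun h => hTne ⟨t, ht, h⟩
    have hcover : (Set.univ : Set X) = ⋃ n : ℕ, {y | ρ x₀ y < 4 * r + n} := by
      ext y
      simp only [mem_univ, mem_iUnion, mem_setOf_eq, true_iff]
      obtain ⟨n, hn⟩ := exists_nat_gt (ρ x₀ y)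
      exact ⟨n, by linarith⟩
    have hdir : Directed (· ⊆ ·) (fun n : ℕ => {y | ρ x₀ y < 4 * r + n}) := by
      refine Monotone.directed_le fun a b hab => hmono x₀ _ _ ?_
      have : (a:ℝ) ≤ b := Nat.cast_le.2 hab
      linarith
    calc μ Set.univ = μ (⋃ n : ℕ, {y | ρ x₀ y < 4 * r + n}) := by rw [hcover]
      _ = ⨆ n : ℕ, μ {y | ρ x₀ y < 4 * r + n} := hdir.measure_iUnion
      _ ≤ C₀ * B := iSup_le fun n => hall _ (by linarith [(Nat.cast_nonneg n : (0:ℝ) ≤ n)])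
      _ ≤ K ^ m * C₀ * B := mul_le_mul' hC₀le le_rfl
end

section
/- Let (X,M,μ) be a measure space with a martingale filtration: a collection B = ∪_{n∈ℤ} B_n where each B_n is a countable partition of X, each A ∈ B_n is a union of sets from B_{n+1}, B generates M, and any two points lie in a common element of B. Let T be the martingale transform Tf = Σ_{A∈B} ε_A Δ_A f with ε_A = ±1, where Δ_A f = Σ_{B: pr(B)=A} (⟨f⟩_B − ⟨f⟩_A) 1_B. Then for every A ∈ B, x ∈ A, and f ∈ L¹(X) supported in pr(A) \ A, |Tf(x)| ≤ 2⟨f⟩_{pr(A)}, where ⟨f⟩_E = μ(E)^{-1}∫_E |f| dμ and pr(A) is the minimal element of B strictly containing A. -/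
open MeasureTheory Set ENNReal

/-- Lemma 8.2: for the martingale transform T associated with a
martingale filtration, a point x ∈ A and an integrable function f supported in
pr(A) \ A, one has |Tf(x)| ≤ 2⟨|f|⟩_{pr(A)}. -/
theorem martingale_transform_parent_bound
    {X : Type*} [m : MeasurableSpace X] (μ : Measure X)
    (𝓑n : ℤ → Set (Set X)) (𝓑 : Set (Set X)) (h𝓑 : 𝓑 = ⋃ n, 𝓑n n)
    (hcnt : ∀ n, (𝓑n n).Countable)
    (hpartcov : ∀ n, ⋃₀ 𝓑n n = Set.univ)
    (hpartdisj : ∀ n, (𝓑n n).Pairwise Disjoint)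
    (hrefine : ∀ n, ∀ A ∈ 𝓑n n, A = ⋃₀ {B ∈ 𝓑n (n + 1) | B ⊆ A})
    (hgen : m = MeasurableSpace.generateFrom 𝓑)
    (hmeas : ∀ A ∈ 𝓑, MeasurableSet A)
    (hfin : ∀ A ∈ 𝓑, 0 < μ A ∧ μ A < ⊤)
    (htwo : ∀ x y : X, ∃ A ∈ 𝓑, x ∈ A ∧ y ∈ A)
    (pr : Set X → Set X)
    (hpr : ∀ A ∈ 𝓑, pr A ∈ 𝓑 ∧ A ⊆ pr A ∧ A ≠ pr A ∧
      ∀ C ∈ 𝓑, A ⊆ C → A ≠ C → pr A ⊆ C)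
    (ε : Set X → ℝ) (hε : ∀ A, ε A = 1 ∨ ε A = -1)
    (Δ : Set X → (X → ℝ) → X → ℝ)
    (hΔ : ∀ (A : Set X) (f : X → ℝ) (x : X),
      Δ A f x = ∑' B : {B : Set X // B ∈ 𝓑 ∧ pr B = A},
        (B : Set X).indicator
          (fun _ => (∫ y in (B : Set X), f y ∂μ) / (μ (B : Set X)).toReal -
            (∫ y in A, f y ∂μ) / (μ A).toReal) x)
    (T : (X → ℝ) → X → ℝ)
    (hT : ∀ (f : X → ℝ) (x : X), T f x = ∑' A : 𝓑, ε A * Δ A f x)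
    (A : Set X) (hA : A ∈ 𝓑) (x : X) (hx : x ∈ A)
    (f : X → ℝ) (hf : Integrable f μ)
    (hsupp : ∀ y, y ∉ pr A \ A → f y = 0) :
    |T f x| ≤ 2 * (∫ y in pr A, |f y| ∂μ) / (μ (pr A)).toReal := by
  classical
  have hmem𝓑 : ∀ {B : Set X}, B ∈ 𝓑 ↔ ∃ n, B ∈ 𝓑n n := by
    intro B; rw [h𝓑]; simp
  -- descend through levels
  have hdesc : ∀ n m : ℤ, n ≤ m → ∀ B ∈ 𝓑n n, ∀ z ∈ B, ∃ C ∈ 𝓑n m, z ∈ C ∧ C ⊆ B := by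
    intro n
    refine Int.le_induction ?_ ?_
    · intro B hB z hz; exact ⟨B, hB, hz, subset_rfl⟩
    · intro m hm ih B hB z hz
      obtain ⟨C, hC, hzC, hCB⟩ := ih B hB z hz
      have h := hrefine m C hC
      have hz' : z ∈ ⋃₀ {D | D ∈ 𝓑n (m+1) ∧ D ⊆ C} := h ▸ hzC
      obtain ⟨D, ⟨hD, hDC⟩, hzD⟩ := hz'
      exact ⟨D, hD, hzD, hDC.trans hCB⟩
  -- deeper-level sets are contained in shallower ones through a common point
  have hkey : ∀ (n m : ℤ), n ≤ m → ∀ B ∈ 𝓑n n, ∀ B' ∈ 𝓑n m, ∀ z, z ∈ B → z ∈ B' → B' ⊆ B := by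
    intro n m hnm B hB B' hB' z hzB hzB'
    obtain ⟨C, hC, hzC, hCB⟩ := hdesc n m hnm B hB z hzB
    rcases eq_or_ne C B' with rfl | hne
    · exact hCB
    · exact ((Set.disjoint_left.mp (hpartdisj m hC hB' hne) hzC) hzB').elim
  -- nesting
  have hnest : ∀ B ∈ 𝓑, ∀ B' ∈ 𝓑, ∀ z, z ∈ B → z ∈ B' → B ⊆ B' ∨ B' ⊆ B := by
    intro B hB B' hB' z hzB hzB'
    obtain ⟨n, hn⟩ := hmem𝓑.mp hB
    obtain ⟨n', hn'⟩ := hmem𝓑.mp hB'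
    rcases le_total n n' with h | h
    · exact Or.inr (hkey n n' h B hn B' hn' z hzB hzB')
    · exact Or.inl (hkey n' n h B' hn' B hn z hzB' hzB)
  have hne𝓑 : ∀ B ∈ 𝓑, B.Nonempty := by
    intro B hB
    rcases Set.eq_empty_or_nonempty B with rfl | h
    · exact absurd (hfin ∅ hB).1 (by simp)
    · exact h
  -- levels compare along strict inclusion
  have hlevel : ∀ (n m : ℤ), ∀ B ∈ 𝓑n n, ∀ B' ∈ 𝓑n m, B ⊆ B' → B ≠ B' → m < n := by
    intro n m B hB B' hB' hsub hne
    by_contra hcon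
    push_neg at hcon
    obtain ⟨z, hz⟩ := hne𝓑 B (hmem𝓑.mpr ⟨n, hB⟩)
    have := hkey n m hcon B hB B' hB' z hz (hsub hz)
    exact hne (subset_antisymm hsub this)
  -- every superset in 𝓑 is an iterated parent
  have hanc : ∀ A' ∈ 𝓑, ∀ B ∈ 𝓑, A' ⊆ B → ∃ k : ℕ, pr^[k] A' = B := by
    suffices h : ∀ d : ℕ, ∀ (A' B : Set X) (n m : ℤ), A' ∈ 𝓑n n → B ∈ 𝓑n m →
        (n - m).toNat ≤ d → A' ⊆ B → ∃ k, pr^[k] A' = B by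
      intro A' hA' B hB hsub
      obtain ⟨n, hn⟩ := hmem𝓑.mp hA'
      obtain ⟨mm, hm⟩ := hmem𝓑.mp hB
      exact h (n - mm).toNat A' B n mm hn hm le_rfl hsub
    intro d
    induction d with
    | zero =>
      intro A' B n mm hn hm hd hsub
      rcases eq_or_ne A' B with rfl | hne
      · exact ⟨0, rfl⟩
      · have := hlevel n mm A' hn B hm hsub hne
        omega
    | succ d ih =>
      intro A' B n mm hn hm hd hsub
      rcases eq_or_ne A' B with rfl | hne
      · exact ⟨0, rfl⟩
      have hmn : mm < n := hlevel n mm A' hn B hm hsub hne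
      have hA'𝓑 : A' ∈ 𝓑 := hmem𝓑.mpr ⟨n, hn⟩
      have hB𝓑 : B ∈ 𝓑 := hmem𝓑.mpr ⟨mm, hm⟩
      obtain ⟨hpr𝓑, hsub', hne', hmin⟩ := hpr A' hA'𝓑
      have hprB : pr A' ⊆ B := hmin B hB𝓑 hsub hne
      obtain ⟨n', hn'⟩ := hmem𝓑.mp hpr𝓑
      have hn'n : n' < n := hlevel n n' A' hn (pr A') hn' hsub' hne'
      rcases eq_or_ne (pr A') B with he | hne2
      · exact ⟨1, by simpa using he⟩
      have hmn' : mm < n' := hlevel n' mm (pr A') hn' B hm hprB hne2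
      obtain ⟨k, hk⟩ := ih (pr A') B n' mm hn' hm (by omega) hprB
      exact ⟨k + 1, by rw [Function.iterate_succ_apply]; exact hk⟩
  -- the ancestor chain
  set P : ℕ → Set X := fun k => pr^[k] A with hPdef
  have hP0 : P 0 = A := rfl
  have hPsucc : ∀ k, P (k + 1) = pr (P k) := fun k => Function.iterate_succ_apply' pr k A
  have hPmem : ∀ k, P k ∈ 𝓑 := by
    intro k
    induction k with
    | zero => exact hA
    | succ k ih => rw [hPsucc]; exact (hpr (P k) ih).1
  have hPsub : ∀ k, P k ⊆ P (k + 1) := fun k => (hPsucc k) ▸ (hpr (P k) (hPmem k)).2.1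
  have hPne : ∀ k, P k ≠ P (k + 1) := fun k => (hPsucc k) ▸ (hpr (P k) (hPmem k)).2.2.1
  have hPx : ∀ k, x ∈ P k := by
    intro k
    induction k with
    | zero => exact hx
    | succ k ih => exact hPsub k ih
  have hPmono : ∀ k l, k ≤ l → P k ⊆ P l := by
    intro k l hkl
    induction l with
    | zero => simp_all
    | succ l ih =>
      rcases Nat.lt_or_ge k (l + 1) with h | h
      · exact (ih (by omega)).trans (hPsub l)
      · have : k = l + 1 := by omega
        subst this; exact subset_rfl
  have hPssub : ∀ k l, k < l → P k ≠ P l := by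
    intro k l hkl heq
    have h1 : P (k + 1) ⊆ P k := by rw [heq]; exact hPmono (k + 1) l (by omega)
    exact hPne k (subset_antisymm (hPsub k) h1)
  have hPinj : Function.Injective (fun k : ℕ => P (k + 1)) := by
    intro k l h
    by_contra hne
    rcases Nat.lt_or_ge k l with hkl | hge
    · exact hPssub (k + 1) (l + 1) (by omega) h
    · exact hPssub (l + 1) (k + 1) (by omega) h.symm
  -- uniqueness of the child containing a given point
  have huniq : ∀ C, ∀ B ∈ 𝓑, ∀ B' ∈ 𝓑, pr B = C → pr B' = C → ∀ z, z ∈ B → z ∈ B' → B = B' := by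
    have key2 : ∀ B ∈ 𝓑, ∀ B' ∈ 𝓑, pr B = pr B' → B ⊆ B' → B = B' := by
      intro B hB B' hB' hpp hsub
      by_contra hne
      have h1 : pr B ⊆ B' := (hpr B hB).2.2.2 B' hB' hsub hne
      have h2 := (hpr B' hB').2.1
      have h3 := (hpr B' hB').2.2.1
      exact h3 (subset_antisymm h2 (hpp ▸ h1))
    intro C B hB B' hB' hpB hpB' z hzB hzB'
    rcases hnest B hB B' hB' z hzB hzB' with h | h
    · exact key2 B hB B' hB' (hpB.trans hpB'.symm) h
    · exact (key2 B' hB' B hB (hpB'.trans hpB.symm) h).symm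
  -- evaluation of Δ
  have hΔeval : ∀ C, ∀ B ∈ 𝓑, pr B = C → x ∈ B →
      Δ C f x = (∫ y in B, f y ∂μ) / (μ B).toReal - (∫ y in C, f y ∂μ) / (μ C).toReal := by
    intro C B hB hpB hxB
    rw [hΔ]
    rw [tsum_eq_single (⟨B, hB, hpB⟩ : {B : Set X // B ∈ 𝓑 ∧ pr B = C})]
    · exact Set.indicator_of_mem hxB _
    · rintro ⟨B', hB', hpB'⟩ hne
      apply Set.indicator_of_notMem
      intro hxB'
      exact hne (Subtype.ext (huniq C B' hB' B hB hpB' hpB x hxB' hxB))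
  have hΔzero : ∀ C, (¬ ∃ B, B ∈ 𝓑 ∧ pr B = C ∧ x ∈ B) → Δ C f x = 0 := by
    intro C hno
    rw [hΔ]
    have h0 : ∀ B : {B : Set X // B ∈ 𝓑 ∧ pr B = C},
        (B : Set X).indicator
          (fun _ => (∫ y in (B : Set X), f y ∂μ) / (μ (B : Set X)).toReal -
            (∫ y in C, f y ∂μ) / (μ C).toReal) x = 0 := by
      rintro ⟨B, hB, hpB⟩
      exact Set.indicator_of_notMem (fun hxB => hno ⟨B, hB, hpB, hxB⟩) _
    exact (tsum_congr h0).trans tsum_zero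
  -- integral facts
  set I : ℝ := ∫ y in pr A, f y ∂μ with hIdef
  have hP1 : P 1 = pr A := by rw [hPsucc 0, hP0]
  have hfzero : ∀ y, y ∉ pr A → f y = 0 := fun y hy => hsupp y (fun h => hy h.1)
  have hIint : I = ∫ y, f y ∂μ :=
    MeasureTheory.setIntegral_eq_integral_of_forall_compl_eq_zero hfzero
  have hintP : ∀ k, 1 ≤ k → ∫ y in P k, f y ∂μ = I := by
    intro k hk
    rw [MeasureTheory.setIntegral_eq_integral_of_forall_compl_eq_zero, hIint]
    intro y hy
    exact hfzero y (fun h => hy (hPmono 1 k hk (hP1 ▸ h)))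
  have hintSubA : ∀ B : Set X, B ⊆ A → ∫ y in B, f y ∂μ = 0 := fun B hB =>
    MeasureTheory.setIntegral_eq_zero_of_forall_eq_zero fun y hy =>
      hsupp y (fun h => h.2 (hB hy))
  -- support of the outer sum lies in the ancestor chain
  have hsuppG : ∀ C ∈ 𝓑, Δ C f x ≠ 0 → ∃ k : ℕ, P (k + 1) = C := by
    intro C hC hne
    have hch : ∃ B, B ∈ 𝓑 ∧ pr B = C ∧ x ∈ B := by
      by_contra hno; exact hne (hΔzero C hno)
    obtain ⟨B, hB, hpB, hxB⟩ := hch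
    have hΔe := hΔeval C B hB hpB hxB
    have hBC : B ⊆ C := hpB ▸ (hpr B hB).2.1
    rcases hnest A hA B hB x hx hxB with hAB | hBA
    · -- A ⊆ B ⊆ C, A ≠ C
      have hAC : A ⊆ C := hAB.trans hBC
      have hAneC : A ≠ C := by
        rintro rfl
        have hBA' : B = A := subset_antisymm hBC hAB
        exact (hpr B hB).2.2.1 (by rw [hpB, hBA'])
      obtain ⟨k, hk⟩ := hanc A hA C hC hAC
      cases k with
      | zero => exact absurd hk hAneC
      | succ k => exact ⟨k, hk⟩
    · rcases eq_or_ne B A with heq | hneBA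
      · exact ⟨0, by rw [hP1, ← hpB, heq]⟩
      · have hCA : C ⊆ A := hpB ▸ (hpr B hB).2.2.2 A hA hBA hneBA
        have : Δ C f x = 0 := by
          rw [hΔe, hintSubA B hBA, hintSubA C hCA]
          simp
        exact absurd this hne
  -- the sequence of terms along the chain
  set g : ℕ → ℝ := fun k => ε (P (k + 1)) * Δ (P (k + 1)) f x with hgdef
  set v : ℕ → ℝ := fun k => |I| / (μ (P k)).toReal with hvdef
  have hmpos : ∀ k, 0 < (μ (P k)).toReal :=
    fun k => ENNReal.toReal_pos (hfin _ (hPmem k)).1.ne' (hfin _ (hPmem k)).2.ne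
  have hmmono : ∀ k, (μ (P k)).toReal ≤ (μ (P (k + 1))).toReal := fun k =>
    (ENNReal.toReal_le_toReal (hfin _ (hPmem k)).2.ne (hfin _ (hPmem (k + 1))).2.ne).mpr
      (measure_mono (hPsub k))
  have hvnonneg : ∀ k, 0 ≤ v k := fun k => div_nonneg (abs_nonneg _) (hmpos k).le
  have hεabs : ∀ C, |ε C| = 1 := fun C => by rcases hε C with h | h <;> simp [h]
  have hΔchain : ∀ k, Δ (P (k + 1)) f x =
      (∫ y in P k, f y ∂μ) / (μ (P k)).toReal -
        (∫ y in P (k + 1), f y ∂μ) / (μ (P (k + 1))).toReal :=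
    fun k => hΔeval (P (k + 1)) (P k) (hPmem k) (hPsucc k).symm (hPx k)
  have habs0 : |g 0| = v 1 := by
    have h1 : Δ (P 1) f x = - (I / (μ (P 1)).toReal) := by
      rw [hΔchain 0, hintSubA (P 0) (hP0 ▸ subset_rfl), hintP 1 le_rfl]
      simp
    rw [hgdef]
    simp only [abs_mul, hεabs, one_mul, h1, abs_neg, abs_div,
      abs_of_pos (hmpos 1)]
    rfl
  have habs' : ∀ k, 1 ≤ k → |g k| = v k - v (k + 1) := by
    intro k hk
    have h1 : Δ (P (k + 1)) f x =
        I / (μ (P k)).toReal - I / (μ (P (k + 1))).toReal := by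
      rw [hΔchain k, hintP k hk, hintP (k + 1) (by omega)]
    have h2 : I / (μ (P k)).toReal - I / (μ (P (k + 1))).toReal =
        I * (1 / (μ (P k)).toReal - 1 / (μ (P (k + 1))).toReal) := by ring
    have h3 : 0 ≤ 1 / (μ (P k)).toReal - 1 / (μ (P (k + 1))).toReal := by
      have := one_div_le_one_div_of_le (hmpos k) (hmmono k)
      linarith
    rw [hgdef]
    simp only [abs_mul, hεabs, one_mul, h1, h2, abs_of_nonneg h3]
    rw [hvdef]
    ring
  have hpartial : ∀ n, ∑ k ∈ Finset.range n, |g k| ≤ 2 * v 1 := by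
    intro n
    cases n with
    | zero => simpa using by positivity
    | succ n =>
      rw [Finset.sum_range_succ' (fun k => |g k|) n]
      have hc : ∀ k ∈ Finset.range n, |g (k + 1)| = v (k + 1) - v (k + 2) :=
        fun k _ => habs' (k + 1) (by omega)
      rw [Finset.sum_congr rfl hc, habs0,
        Finset.sum_range_sub' (fun k => v (k + 1)) n]
      have := hvnonneg (n + 1)
      linarith
  have hsumabs : Summable (fun k => |g k|) :=
    summable_of_sum_range_le (fun k => abs_nonneg _) hpartial
  have htsumabs : ∑' k, |g k| ≤ 2 * v 1 :=
    Real.tsum_le_of_sum_range_le (fun k => abs_nonneg _) hpartial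
  -- transfer the sum over 𝓑 to the chain
  have hbij : ∑' C : 𝓑, ε (C : Set X) * Δ (C : Set X) f x = ∑' k, g k := by
    apply tsum_eq_tsum_of_ne_zero_bij
      (i := fun k : Function.support g => (⟨P ((k : ℕ) + 1), hPmem _⟩ : 𝓑))
    · intro a b h
      have h' : P ((a : ℕ) + 1) = P ((b : ℕ) + 1) := congrArg Subtype.val h
      exact Subtype.ext (hPinj h')
    · rintro ⟨C, hC⟩ hne
      simp only [Function.mem_support] at hne
      have hΔne : Δ C f x ≠ 0 := by
        intro h0
        exact hne (by simp [h0])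
      obtain ⟨k, hk⟩ := hsuppG C hC hΔne
      refine ⟨⟨k, ?_⟩, ?_⟩
      · simp only [Function.mem_support, hgdef, hk]
        exact hne
      · exact Subtype.ext hk
    · intro z; rfl
  -- conclusion
  have hsumg : Summable g := Summable.of_abs hsumabs
  have hTabs : |T f x| ≤ 2 * v 1 := by
    rw [hT f x, hbij]
    calc |∑' k, g k| ≤ ∑' k, |g k| := by
          simpa [Real.norm_eq_abs] using
            norm_tsum_le_tsum_norm (f := g) (by simpa [Real.norm_eq_abs] using hsumabs)
      _ ≤ 2 * v 1 := htsumabs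
  have hIle : |I| ≤ ∫ y in pr A, |f y| ∂μ := by
    simpa [Real.norm_eq_abs] using
      norm_integral_le_integral_norm (μ := μ.restrict (pr A)) f
  have hv1 : v 1 = |I| / (μ (pr A)).toReal := by simp only [hvdef]; rw [hP1]
  rw [hv1] at hTabs
  refine hTabs.trans ?_
  rw [mul_div_assoc]
  have hpos : (0:ℝ) < (μ (pr A)).toReal := hP1 ▸ hmpos 1
  gcongr
end
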